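/- arXiv:2404.10962 — 5 statements merged into one kernel-verified Lean document; each statement's English description precedes it below -/
import Mathlib

section
/- Let m, n, and k be integers with 1 ≤ m ≤ n and γ(K_{m,n}) < k < m + n, where K_{m,n} is the complete bipartite graph with parts of sizes m and n. Then the k-dominating graph D_k(K_{m,n}) is Eulerian if and only if either (i) m = 1, n is even, and k is odd, or (ii) m ≥ 3, m ≡ n (mod 2), and k = 3. -/
open SimpleGraph

/-- `D` is a dominating set of `G`: every vertex not in `D` has a neighbour in `D`. -/
def IsDomSet {V : Type*} (G : SimpleGraph V) (D : Set V) : Prop :=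
  ∀ v ∉ D, ∃ u ∈ D, G.Adj u v

/-- The dominating graph of `G`: vertices are dominating sets of `G`, two dominating
sets are adjacent iff their symmetric difference has exactly one element. -/
def DomGraph {V : Type*} (G : SimpleGraph V) :
    SimpleGraph {D : Set V // IsDomSet G D} where
  Adj A B := (symmDiff A.1 B.1).ncard = 1
  symm := ⟨fun A B h => by
    have h' : (symmDiff A.1 B.1).ncard = 1 := h
    show (symmDiff B.1 A.1).ncard = 1
    rwa [symmDiff_comm]⟩
  loopless := ⟨fun A h => by
    have h' : (symmDiff A.1 A.1).ncard = 1 := h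
    simp [symmDiff_self, Set.bot_eq_empty] at h'⟩

/-- The `k`-dominating graph of `G`: vertices are dominating sets of `G` of cardinality
at most `k`, two such sets are adjacent iff their symmetric difference has exactly one
element. -/
def KDomGraph {V : Type*} (G : SimpleGraph V) (k : ℕ) :
    SimpleGraph {D : Set V // IsDomSet G D ∧ D.ncard ≤ k} where
  Adj A B := (symmDiff A.1 B.1).ncard = 1
  symm := ⟨fun A B h => by
    have h' : (symmDiff A.1 B.1).ncard = 1 := h
    show (symmDiff B.1 A.1).ncard = 1
    rwa [symmDiff_comm]⟩
  loopless := ⟨fun A h => by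
    have h' : (symmDiff A.1 A.1).ncard = 1 := h
    simp [symmDiff_self, Set.bot_eq_empty] at h'⟩

/-- A graph is Eulerian iff every vertex has even degree and any two edges lie in the
same connected component (i.e. at most one component contains an edge). -/
def IsEulerian {W : Type*} (H : SimpleGraph W) : Prop :=
  (∀ v : W, Even (H.neighborSet v).ncard) ∧
  ∀ u v x y : W, H.Adj u v → H.Adj x y → H.Reachable u x

/-- The domination number of `G`: the minimum cardinality of a dominating set. -/
noncomputable def domNumber {V : Type*} (G : SimpleGraph V) : ℕ :=
  sInf {n | ∃ D : Set V, IsDomSet G D ∧ D.ncard = n}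

open Set
section General
variable {V : Type*} [Fintype V] {G : SimpleGraph V} {k : ℕ}

lemma isDomSet_mono {D D' : Set V} (h : D ⊆ D') (hD : IsDomSet G D) : IsDomSet G D' := by
  intro v hv
  obtain ⟨u, hu, hadj⟩ := hD v (fun hvD => hv (h hvD))
  exact ⟨u, h hu, hadj⟩

lemma symmDiff_insert {D : Set V} {v : V} (hv : v ∉ D) : symmDiff D (insert v D) = {v} := by
  rw [Set.symmDiff_def]
  ext x
  simp only [Set.mem_union, Set.mem_diff, Set.mem_insert_iff, Set.mem_singleton_iff]
  constructor
  · rintro (⟨hx, h⟩ | ⟨h1 | h1, h2⟩) <;> tauto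
  · rintro rfl; tauto

lemma symmDiff_diff {D : Set V} {v : V} (hv : v ∈ D) : symmDiff D (D \ {v}) = {v} := by
  rw [Set.symmDiff_def]
  ext x
  simp only [Set.mem_union, Set.mem_diff, Set.mem_singleton_iff]
  constructor
  · rintro (⟨hx, h⟩ | ⟨⟨h1, h2⟩, h3⟩) <;> tauto
  · rintro rfl; tauto

lemma symmDiff_ncard_one {D B : Set V} :
    (symmDiff D B).ncard = 1 ↔ (∃ v, v ∉ D ∧ B = insert v D) ∨ (∃ v, v ∈ D ∧ B = D \ {v}) := by
  constructor
  · intro h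
    rw [Set.ncard_eq_one] at h
    obtain ⟨a, ha⟩ := h
    rw [Set.symmDiff_def] at ha
    by_cases haD : a ∈ D
    · right
      refine ⟨a, haD, ?_⟩
      have haB : a ∉ B := by
        intro haB
        have : a ∈ D \ B ∪ B \ D := ha ▸ Set.mem_singleton a
        rcases this with h1 | h1
        exacts [h1.2 haB, h1.2 haD]
      ext x
      simp only [Set.mem_diff, Set.mem_singleton_iff]
      constructor
      · intro hx
        have hxa : x ≠ a := fun h => haB (h ▸ hx)
        refine ⟨?_, hxa⟩
        by_contra hxD
        have : x ∈ D \ B ∪ B \ D := Set.mem_union_right _ ⟨hx, hxD⟩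
        rw [ha] at this; exact hxa this
      · rintro ⟨hxD, hxa⟩
        by_contra hxB
        have : x ∈ D \ B ∪ B \ D := Set.mem_union_left _ ⟨hxD, hxB⟩
        rw [ha] at this; exact hxa this
    · left
      refine ⟨a, haD, ?_⟩
      have haB : a ∈ B := by
        have : a ∈ D \ B ∪ B \ D := ha ▸ Set.mem_singleton a
        rcases this with h1 | h1
        exacts [absurd h1.1 haD, h1.1]
      ext x
      simp only [Set.mem_insert_iff]
      constructor
      · intro hx
        by_cases hxa : x = a
        · left; exact hxa
        · right
          by_contra hxD
          have : x ∈ D \ B ∪ B \ D := Set.mem_union_right _ ⟨hx, hxD⟩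
          rw [ha] at this; exact hxa this
      · rintro (rfl | hxD)
        · exact haB
        · by_contra hxB
          have hxa : x ∈ D \ B ∪ B \ D := Set.mem_union_left _ ⟨hxD, hxB⟩
          rw [ha] at hxa
          exact haD (hxa ▸ hxD)
  · rintro (⟨v, hv, rfl⟩ | ⟨v, hv, rfl⟩)
    · rw [symmDiff_insert hv]; exact Set.ncard_singleton v
    · rw [symmDiff_diff hv]; exact Set.ncard_singleton v

/-- vertices addable to `D` keeping a dominating set of size `≤ k`. -/
def AddSet (G : SimpleGraph V) (k : ℕ) (D : Set V) : Set V :=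
  {v | v ∉ D ∧ D.ncard + 1 ≤ k ∧ IsDomSet G (insert v D)}

/-- vertices removable from `D` keeping a dominating set. -/
def RemSet (G : SimpleGraph V) (D : Set V) : Set V :=
  {v | v ∈ D ∧ IsDomSet G (D \ {v})}

lemma neighborSet_ncard {D : Set V} (hD : IsDomSet G D) (hk : D.ncard ≤ k) :
    ((KDomGraph G k).neighborSet ⟨D, hD, hk⟩).ncard
      = (AddSet G k D).ncard + (RemSet G D).ncard := by
  classical
  set f : V → Set V := fun v => if v ∈ D then D \ {v} else insert v D with hf
  have hinj : Set.InjOn f (AddSet G k D ∪ RemSet G D) := by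
    rintro v (hv | hv) w (hw | hw) hvw
    · simp only [hf, if_neg hv.1, if_neg hw.1] at hvw
      have : v ∈ insert w D := hvw ▸ Set.mem_insert v D
      rcases this with h | h
      · exact h
      · exact absurd h hv.1
    · exfalso
      simp only [hf, if_neg hv.1, if_pos hw.1] at hvw
      have hwmem : w ∈ insert v D := Set.mem_insert_iff.mpr (Or.inr hw.1)
      rw [hvw] at hwmem
      exact hwmem.2 rfl
    · exfalso
      simp only [hf, if_pos hv.1, if_neg hw.1] at hvw
      have hvmem : v ∈ insert w D := Set.mem_insert_iff.mpr (Or.inr hv.1)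
      rw [← hvw] at hvmem
      exact hvmem.2 rfl
    · simp only [hf, if_pos hv.1, if_pos hw.1] at hvw
      by_contra hne
      have : v ∈ D \ {w} := ⟨hv.1, fun h => hne h⟩
      rw [← hvw] at this
      exact this.2 rfl
  have himg : Subtype.val '' ((KDomGraph G k).neighborSet ⟨D, hD, hk⟩)
      = f '' (AddSet G k D ∪ RemSet G D) := by
    ext B
    simp only [Set.mem_image]
    constructor
    · rintro ⟨⟨B', hB'dom, hB'k⟩, hadj, rfl⟩
      have h1 : (symmDiff D B').ncard = 1 := hadj
      rw [symmDiff_ncard_one] at h1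
      rcases h1 with ⟨v, hv, rfl⟩ | ⟨v, hv, rfl⟩
      · refine ⟨v, Or.inl ⟨hv, ?_, hB'dom⟩, by simp [hf, if_neg hv]⟩
        rw [← Set.ncard_insert_of_notMem hv (Set.toFinite D)]
        exact hB'k
      · exact ⟨v, Or.inr ⟨hv, hB'dom⟩, by simp [hf, if_pos hv]⟩
    · rintro ⟨v, hv | hv, rfl⟩
      · refine ⟨⟨insert v D, isDomSet_mono (Set.subset_insert v D) hD, ?_⟩, ?_, by simp [hf, if_neg hv.1]⟩
        · rw [Set.ncard_insert_of_notMem hv.1 (Set.toFinite D)]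
          exact hv.2.1
        · show (symmDiff D (insert v D)).ncard = 1
          rw [symmDiff_insert hv.1]; exact Set.ncard_singleton v
      · refine ⟨⟨D \ {v}, hv.2, le_trans (Set.ncard_le_ncard Set.diff_subset (Set.toFinite D)) hk⟩,
          ?_, by simp [hf, if_pos hv.1]⟩
        show (symmDiff D (D \ {v})).ncard = 1
        rw [symmDiff_diff hv.1]; exact Set.ncard_singleton v
  have hd : Disjoint (AddSet G k D) (RemSet G D) := by
    rw [Set.disjoint_left]
    rintro v hv hv'
    exact hv.1 hv'.1
  calc ((KDomGraph G k).neighborSet ⟨D, hD, hk⟩).ncard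
      = (Subtype.val '' ((KDomGraph G k).neighborSet ⟨D, hD, hk⟩)).ncard :=
        (Set.ncard_image_of_injective _ Subtype.val_injective).symm
    _ = (f '' (AddSet G k D ∪ RemSet G D)).ncard := by rw [himg]
    _ = (AddSet G k D ∪ RemSet G D).ncard := Set.ncard_image_of_injOn hinj
    _ = (AddSet G k D).ncard + (RemSet G D).ncard :=
        Set.ncard_union_eq hd (Set.toFinite _) (Set.toFinite _)

end General

section Bipartite
variable {m n k : ℕ}

def PL {m n : ℕ} (D : Set (Fin m ⊕ Fin n)) : Set (Fin m) := {x | Sum.inl x ∈ D}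
def PR {m n : ℕ} (D : Set (Fin m ⊕ Fin n)) : Set (Fin n) := {y | Sum.inr y ∈ D}

lemma ncard_univ_fin : (Set.univ : Set (Fin m)).ncard = m := by
  rw [Set.ncard_univ, Nat.card_eq_fintype_card, Fintype.card_fin]

lemma PL_le {D : Set (Fin m ⊕ Fin n)} : (PL D).ncard ≤ m := by
  have := Set.ncard_le_ncard (Set.subset_univ (PL D)) (Set.toFinite _)
  rwa [ncard_univ_fin] at this

lemma PR_le {D : Set (Fin m ⊕ Fin n)} : (PR D).ncard ≤ n := by
  have := Set.ncard_le_ncard (Set.subset_univ (PR D)) (Set.toFinite _)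
  rwa [ncard_univ_fin] at this

lemma univ_iff_ncard {α : Type*} [Fintype α] {s : Set α} :
    s = Set.univ ↔ s.ncard = Fintype.card α := by
  constructor
  · rintro rfl; rw [Set.ncard_univ, Nat.card_eq_fintype_card]
  · intro h
    refine Set.eq_of_subset_of_ncard_le (Set.subset_univ s) ?_ (Set.toFinite _)
    rw [Set.ncard_univ, Nat.card_eq_fintype_card, h]

lemma D_eq_split (D : Set (Fin m ⊕ Fin n)) : D = Sum.inl '' PL D ∪ Sum.inr '' PR D := by
  ext v
  cases v with
  | inl x => simp [PL]
  | inr y => simp [PR]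

lemma disj_images {s : Set (Fin m)} {t : Set (Fin n)} :
    Disjoint (Sum.inl '' s) ((Sum.inr '' t : Set (Fin m ⊕ Fin n))) := by
  rw [Set.disjoint_left]
  rintro v ⟨x, hx, rfl⟩ ⟨y, hy, h⟩
  simp at h

lemma ncard_split (D : Set (Fin m ⊕ Fin n)) : D.ncard = (PL D).ncard + (PR D).ncard := by
  conv_lhs => rw [D_eq_split D]
  rw [Set.ncard_union_eq disj_images (Set.toFinite _) (Set.toFinite _),
    Set.ncard_image_of_injective _ Sum.inl_injective,
    Set.ncard_image_of_injective _ Sum.inr_injective]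

lemma isDom_iff (hm : 1 ≤ m) (hn : 1 ≤ n) {D : Set (Fin m ⊕ Fin n)} :
    IsDomSet (completeBipartiteGraph (Fin m) (Fin n)) D ↔
      ((PL D).Nonempty ∧ (PR D).Nonempty) ∨ PL D = Set.univ ∨ PR D = Set.univ := by
  constructor
  · intro hD
    by_cases h1 : PL D = Set.univ
    · exact Or.inr (Or.inl h1)
    by_cases h2 : PR D = Set.univ
    · exact Or.inr (Or.inr h2)
    left
    obtain ⟨x0, hx0⟩ : ∃ x, x ∉ PL D := by
      by_contra h; push_neg at h; exact h1 (Set.eq_univ_of_forall h)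
    obtain ⟨y0, hy0⟩ : ∃ y, y ∉ PR D := by
      by_contra h; push_neg at h; exact h2 (Set.eq_univ_of_forall h)
    constructor
    · obtain ⟨u, hu, hadj⟩ := hD (Sum.inr y0) hy0
      cases u with
      | inl x => exact ⟨x, hu⟩
      | inr y => simp at hadj
    · obtain ⟨u, hu, hadj⟩ := hD (Sum.inl x0) hx0
      cases u with
      | inl x => simp at hadj
      | inr y => exact ⟨y, hu⟩
  · rintro (⟨⟨x1, hx1⟩, ⟨y1, hy1⟩⟩ | h | h) v hv
    · cases v with
      | inl x => exact ⟨Sum.inr y1, hy1, by simp⟩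
      | inr y => exact ⟨Sum.inl x1, hx1, by simp⟩
    · cases v with
      | inl x =>
        have hx : x ∈ PL D := h.symm ▸ Set.mem_univ x
        exact absurd hx hv
      | inr y =>
        have hx : (⟨0, hm⟩ : Fin m) ∈ PL D := h.symm ▸ Set.mem_univ _
        exact ⟨Sum.inl ⟨0, hm⟩, hx, by simp⟩
    · cases v with
      | inl x =>
        have hy : (⟨0, hn⟩ : Fin n) ∈ PR D := h.symm ▸ Set.mem_univ _
        exact ⟨Sum.inr ⟨0, hn⟩, hy, by simp⟩
      | inr y =>
        have hy : y ∈ PR D := h.symm ▸ Set.mem_univ y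
        exact absurd hy hv

lemma isDom_ncard_iff (hm : 1 ≤ m) (hn : 1 ≤ n) {D : Set (Fin m ⊕ Fin n)} :
    IsDomSet (completeBipartiteGraph (Fin m) (Fin n)) D ↔
      (1 ≤ (PL D).ncard ∧ 1 ≤ (PR D).ncard) ∨ (PL D).ncard = m ∨ (PR D).ncard = n := by
  rw [isDom_iff hm hn]
  rw [← Set.ncard_pos (Set.toFinite _), ← Set.ncard_pos (Set.toFinite _)]
  rw [univ_iff_ncard, univ_iff_ncard, Fintype.card_fin, Fintype.card_fin]
  omega

lemma exists_D (a b : ℕ) (ha : a ≤ m) (hb : b ≤ n) :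
    ∃ D : Set (Fin m ⊕ Fin n), (PL D).ncard = a ∧ (PR D).ncard = b := by
  obtain ⟨s, -, hs⟩ := Finset.exists_subset_card_eq (s := (Finset.univ : Finset (Fin m))) (n := a)
    (by simpa using ha)
  obtain ⟨t, -, ht⟩ := Finset.exists_subset_card_eq (s := (Finset.univ : Finset (Fin n))) (n := b)
    (by simpa using hb)
  refine ⟨Sum.inl '' ↑s ∪ Sum.inr '' ↑t, ?_, ?_⟩
  · have : PL (Sum.inl '' (↑s : Set (Fin m)) ∪ Sum.inr '' (↑t : Set (Fin n))) = ↑s := by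
      ext x; simp [PL]
    rw [this, Set.ncard_coe_finset, hs]
  · have : PR (Sum.inl '' (↑s : Set (Fin m)) ∪ Sum.inr '' (↑t : Set (Fin n))) = ↑t := by
      ext y; simp [PR]
    rw [this, Set.ncard_coe_finset, ht]

end Bipartite

section Bipartite2
variable {m n k : ℕ}

lemma PL_diff_inl {D : Set (Fin m ⊕ Fin n)} {x : Fin m} :
    PL (D \ {Sum.inl x}) = PL D \ {x} := by ext a; simp [PL]

lemma PR_diff_inl {D : Set (Fin m ⊕ Fin n)} {x : Fin m} :
    PR (D \ {Sum.inl x}) = PR D := by ext a; simp [PR]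

lemma PL_diff_inr {D : Set (Fin m ⊕ Fin n)} {y : Fin n} :
    PL (D \ {Sum.inr y}) = PL D := by ext a; simp [PL]

lemma PR_diff_inr {D : Set (Fin m ⊕ Fin n)} {y : Fin n} :
    PR (D \ {Sum.inr y}) = PR D \ {y} := by ext a; simp [PR]

lemma remSet_eq (hm : 1 ≤ m) (hn : 1 ≤ n) {D : Set (Fin m ⊕ Fin n)} :
    RemSet (completeBipartiteGraph (Fin m) (Fin n)) D =
      (if (2 ≤ (PL D).ncard ∧ 1 ≤ (PR D).ncard) ∨ (PR D).ncard = n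
        then Sum.inl '' PL D else ∅)
      ∪ (if (2 ≤ (PR D).ncard ∧ 1 ≤ (PL D).ncard) ∨ (PL D).ncard = m
        then Sum.inr '' PR D else ∅) := by
  classical
  ext v
  rw [Set.mem_union]
  have hmem1 : v ∈ (if (2 ≤ (PL D).ncard ∧ 1 ≤ (PR D).ncard) ∨ (PR D).ncard = n
        then Sum.inl '' PL D else ∅) ↔
      (((2 ≤ (PL D).ncard ∧ 1 ≤ (PR D).ncard) ∨ (PR D).ncard = n) ∧ v ∈ Sum.inl '' PL D) := by
    split_ifs with h <;> simp [h]
  have hmem2 : v ∈ (if (2 ≤ (PR D).ncard ∧ 1 ≤ (PL D).ncard) ∨ (PL D).ncard = m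
        then Sum.inr '' PR D else ∅) ↔
      (((2 ≤ (PR D).ncard ∧ 1 ≤ (PL D).ncard) ∨ (PL D).ncard = m) ∧ v ∈ Sum.inr '' PR D) := by
    split_ifs with h <;> simp [h]
  rw [hmem1, hmem2]
  have ham : (PL D).ncard ≤ m := PL_le
  have hbn : (PR D).ncard ≤ n := PR_le
  cases v with
  | inl x =>
    have himg : (Sum.inl x : Fin m ⊕ Fin n) ∈ Sum.inl '' PL D ↔ x ∈ PL D := by simp
    have himg2 : (Sum.inl x : Fin m ⊕ Fin n) ∉ Sum.inr '' PR D := by simp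
    simp only [RemSet, Set.mem_setOf_eq, himg, himg2, and_false, or_false]
    rw [isDom_ncard_iff hm hn, PL_diff_inl, PR_diff_inl]
    by_cases hx : x ∈ PL D
    · have hxD : Sum.inl x ∈ D := hx
      have ha1 : 1 ≤ (PL D).ncard := (Set.ncard_pos (Set.toFinite _)).mpr ⟨x, hx⟩
      rw [Set.ncard_diff_singleton_of_mem hx]
      simp only [hxD, hx, true_and, and_true]
      omega
    · have hxD : Sum.inl x ∉ D := hx
      simp only [hxD, hx, false_and, and_false]
  | inr y =>
    have himg : (Sum.inr y : Fin m ⊕ Fin n) ∈ Sum.inr '' PR D ↔ y ∈ PR D := by simp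
    have himg2 : (Sum.inr y : Fin m ⊕ Fin n) ∉ Sum.inl '' PL D := by simp
    simp only [RemSet, Set.mem_setOf_eq, himg, himg2, and_false, false_or]
    rw [isDom_ncard_iff hm hn, PL_diff_inr, PR_diff_inr]
    by_cases hy : y ∈ PR D
    · have hyD : Sum.inr y ∈ D := hy
      have hb1 : 1 ≤ (PR D).ncard := (Set.ncard_pos (Set.toFinite _)).mpr ⟨y, hy⟩
      rw [Set.ncard_diff_singleton_of_mem hy]
      simp only [hyD, hy, true_and, and_true]
      omega
    · have hyD : Sum.inr y ∉ D := hy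
      simp only [hyD, hy, false_and, and_false]

lemma remSet_ncard (hm : 1 ≤ m) (hn : 1 ≤ n) {D : Set (Fin m ⊕ Fin n)} :
    (RemSet (completeBipartiteGraph (Fin m) (Fin n)) D).ncard =
      (if (2 ≤ (PL D).ncard ∧ 1 ≤ (PR D).ncard) ∨ (PR D).ncard = n then (PL D).ncard else 0)
      + (if (2 ≤ (PR D).ncard ∧ 1 ≤ (PL D).ncard) ∨ (PL D).ncard = m then (PR D).ncard else 0) := by
  classical
  rw [remSet_eq hm hn]
  split_ifs with h1 h2 h2
  · rw [Set.ncard_union_eq disj_images (Set.toFinite _) (Set.toFinite _),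
      Set.ncard_image_of_injective _ Sum.inl_injective,
      Set.ncard_image_of_injective _ Sum.inr_injective]
  · rw [Set.union_empty, Set.ncard_image_of_injective _ Sum.inl_injective]; omega
  · rw [Set.empty_union, Set.ncard_image_of_injective _ Sum.inr_injective]; omega
  · simp
end Bipartite2

section Master
variable {m n k : ℕ}

lemma addSet_ncard {D : Set (Fin m ⊕ Fin n)}
    (hD : IsDomSet (completeBipartiteGraph (Fin m) (Fin n)) D) :
    (AddSet (completeBipartiteGraph (Fin m) (Fin n)) k D).ncard =
      if D.ncard < k then m + n - D.ncard else 0 := by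
  classical
  split_ifs with hlt
  · have hAdd : AddSet (completeBipartiteGraph (Fin m) (Fin n)) k D = Dᶜ := by
      ext v
      simp only [AddSet, Set.mem_setOf_eq, Set.mem_compl_iff]
      constructor
      · exact fun h => h.1
      · intro h
        exact ⟨h, by omega, isDomSet_mono (Set.subset_insert v D) hD⟩
    rw [hAdd]
    have hcompl := Set.ncard_add_ncard_compl D (Set.toFinite _) (Set.toFinite _)
    have hcard : Nat.card (Fin m ⊕ Fin n) = m + n := by
      rw [Nat.card_eq_fintype_card, Fintype.card_sum, Fintype.card_fin, Fintype.card_fin]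
    omega
  · have hAdd : AddSet (completeBipartiteGraph (Fin m) (Fin n)) k D = ∅ := by
      ext v
      simp only [AddSet, Set.mem_setOf_eq, Set.mem_empty_iff_false, iff_false]
      rintro ⟨-, h, -⟩
      omega
    rw [hAdd, Set.ncard_empty]

lemma deg_formula (hm : 1 ≤ m) (hn : 1 ≤ n) {D : Set (Fin m ⊕ Fin n)}
    (hD : IsDomSet (completeBipartiteGraph (Fin m) (Fin n)) D) (hk : D.ncard ≤ k) :
    ((KDomGraph (completeBipartiteGraph (Fin m) (Fin n)) k).neighborSet ⟨D, hD, hk⟩).ncard =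
      (if D.ncard < k then m + n - D.ncard else 0)
      + ((if (2 ≤ (PL D).ncard ∧ 1 ≤ (PR D).ncard) ∨ (PR D).ncard = n then (PL D).ncard else 0)
      + (if (2 ≤ (PR D).ncard ∧ 1 ≤ (PL D).ncard) ∨ (PL D).ncard = m then (PR D).ncard else 0)) := by
  rw [neighborSet_ncard hD hk, addSet_ncard hD, remSet_ncard hm hn]
end Master

section DomNum
variable {m n k : ℕ}

lemma univ_dom {V : Type*} (G : SimpleGraph V) : IsDomSet G Set.univ :=
  fun v hv => absurd (Set.mem_univ v) hv

lemma domNumber_mem (m n : ℕ) :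
    ∃ D : Set (Fin m ⊕ Fin n), IsDomSet (completeBipartiteGraph (Fin m) (Fin n)) D ∧
      D.ncard = domNumber (completeBipartiteGraph (Fin m) (Fin n)) := by
  have hne : {j | ∃ D : Set (Fin m ⊕ Fin n),
      IsDomSet (completeBipartiteGraph (Fin m) (Fin n)) D ∧ D.ncard = j}.Nonempty :=
    ⟨_, Set.univ, univ_dom _, rfl⟩
  exact Nat.sInf_mem hne

lemma one_le_domNumber (hm : 1 ≤ m) (hn : 1 ≤ n) :
    1 ≤ domNumber (completeBipartiteGraph (Fin m) (Fin n)) := by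
  obtain ⟨D, hD, hcard⟩ := domNumber_mem m n
  rw [← hcard]
  rw [isDom_ncard_iff hm hn] at hD
  have h1 := ncard_split D
  have h2 : (PL D).ncard ≤ m := PL_le
  have h3 : (PR D).ncard ≤ n := PR_le
  omega

lemma two_le_domNumber (hm : 2 ≤ m) (hn : 2 ≤ n) :
    2 ≤ domNumber (completeBipartiteGraph (Fin m) (Fin n)) := by
  obtain ⟨D, hD, hcard⟩ := domNumber_mem m n
  rw [← hcard]
  rw [isDom_ncard_iff (by omega) (by omega)] at hD
  have h1 := ncard_split D
  omega

end DomNum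

section Reach
variable {V : Type*} [Fintype V] {G : SimpleGraph V} {k : ℕ}

lemma kdom_adj_insert {D : Set V} {v : V} (hv : v ∉ D) (hD : IsDomSet G D) (hk : D.ncard ≤ k)
    (hD' : IsDomSet G (insert v D)) (hk' : (insert v D).ncard ≤ k) :
    (KDomGraph G k).Adj ⟨D, hD, hk⟩ ⟨insert v D, hD', hk'⟩ := by
  show (symmDiff D (insert v D)).ncard = 1
  rw [symmDiff_insert hv]; exact Set.ncard_singleton v

lemma kdom_adj_diff {D : Set V} {v : V} (hv : v ∈ D) (hD : IsDomSet G D) (hk : D.ncard ≤ k)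
    (hD' : IsDomSet G (D \ {v})) (hk' : (D \ {v}).ncard ≤ k) :
    (KDomGraph G k).Adj ⟨D, hD, hk⟩ ⟨D \ {v}, hD', hk'⟩ := by
  show (symmDiff D (D \ {v})).ncard = 1
  rw [symmDiff_diff hv]; exact Set.ncard_singleton v

end Reach

section CaseOne
variable {n k : ℕ}

lemma dom_of_c {D : Set (Fin 1 ⊕ Fin n)} (hc : Sum.inl 0 ∈ D) :
    IsDomSet (completeBipartiteGraph (Fin 1) (Fin n)) D := by
  intro v hv
  cases v with
  | inl x =>
    have : x = 0 := Subsingleton.elim x 0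
    subst this
    exact absurd hc hv
  | inr y => exact ⟨Sum.inl 0, hc, by simp⟩

lemma c_mem_vertex (hn2 : n % 2 = 0) (hk2 : k % 2 = 1) (hkn : k ≤ n)
    {D : Set (Fin 1 ⊕ Fin n)} (hD : IsDomSet (completeBipartiteGraph (Fin 1) (Fin n)) D)
    (hle : D.ncard ≤ k) : Sum.inl 0 ∈ D := by
  by_contra hc
  have hPL : PL D = ∅ := by
    ext x
    have : x = 0 := Subsingleton.elim x 0
    subst this
    simp [PL, hc]
  rw [isDom_ncard_iff le_rfl (by omega : 1 ≤ n)] at hD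
  have hsplit := ncard_split D
  rw [hPL, Set.ncard_empty] at hD hsplit
  have hbn : (PR D).ncard ≤ n := PR_le
  omega

lemma reach_c (hk1 : 1 ≤ k) (hck : ({Sum.inl 0} : Set (Fin 1 ⊕ Fin n)).ncard ≤ k) :
    ∀ (j : ℕ) (D : Set (Fin 1 ⊕ Fin n))
      (hD : IsDomSet (completeBipartiteGraph (Fin 1) (Fin n)) D) (hle : D.ncard ≤ k),
      D.ncard ≤ j → Sum.inl 0 ∈ D →
      (KDomGraph (completeBipartiteGraph (Fin 1) (Fin n)) k).Reachable ⟨D, hD, hle⟩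
        ⟨{Sum.inl 0}, dom_of_c rfl, hck⟩ := by
  intro j
  induction j with
  | zero =>
    intro D hD hle hj hc
    rw [Nat.le_zero, Set.ncard_eq_zero (Set.toFinite _)] at hj
    subst hj
    exact absurd hc (Set.notMem_empty _)
  | succ j ih =>
    intro D hD hle hj hc
    by_cases hD1 : D = {Sum.inl 0}
    · have : (⟨D, hD, hle⟩ : {D : Set (Fin 1 ⊕ Fin n) //
        IsDomSet (completeBipartiteGraph (Fin 1) (Fin n)) D ∧ D.ncard ≤ k}) =
          ⟨{Sum.inl 0}, dom_of_c rfl, hck⟩ := Subtype.ext hD1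
      rw [this]
    · obtain ⟨v, hvD, hv0⟩ : ∃ v ∈ D, v ≠ Sum.inl 0 := by
        by_contra h
        push_neg at h
        exact hD1 (Set.eq_singleton_iff_unique_mem.mpr ⟨hc, h⟩)
      have hc' : Sum.inl 0 ∈ D \ {v} := ⟨hc, fun h => hv0 (by simpa using h.symm)⟩
      have hD' : IsDomSet (completeBipartiteGraph (Fin 1) (Fin n)) (D \ {v}) := dom_of_c hc'
      have hcard : (D \ {v}).ncard = D.ncard - 1 :=
        Set.ncard_diff_singleton_of_mem hvD
      have hle' : (D \ {v}).ncard ≤ k := by omega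
      have hpos : 1 ≤ D.ncard := (Set.ncard_pos (Set.toFinite _)).mpr ⟨v, hvD⟩
      exact (kdom_adj_diff hvD hD hle hD' hle').reachable.trans
        (ih (D \ {v}) hD' hle' (by omega) hc')

lemma eulerian_case1 (hn2 : n % 2 = 0) (hk2 : k % 2 = 1) (h2k : 2 ≤ k) (hkn : k ≤ n) :
    IsEulerian (KDomGraph (completeBipartiteGraph (Fin 1) (Fin n)) k) := by
  have hn1 : 1 ≤ n := by omega
  constructor
  · rintro ⟨D, hD, hle⟩
    rw [Nat.even_iff, deg_formula le_rfl hn1 hD hle]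
    have hdom := (isDom_ncard_iff le_rfl hn1).mp hD
    have hsplit := ncard_split D
    have ha : (PL D).ncard ≤ 1 := PL_le
    have hb : (PR D).ncard ≤ n := PR_le
    split_ifs <;> omega
  · rintro u v x y huv hxy
    have hck : ({Sum.inl 0} : Set (Fin 1 ⊕ Fin n)).ncard ≤ k := by
      rw [Set.ncard_singleton]; omega
    have h1 := reach_c (by omega) hck u.1.ncard u.1 u.2.1 u.2.2 le_rfl
      (c_mem_vertex hn2 hk2 hkn u.2.1 u.2.2)
    have h2 := reach_c (by omega) hck x.1.ncard x.1 x.2.1 x.2.2 le_rfl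
      (c_mem_vertex hn2 hk2 hkn x.2.1 x.2.2)
    exact h1.trans h2.symm

end CaseOne

section CaseTwo
variable {m n : ℕ}

lemma dom_of_both {D : Set (Fin m ⊕ Fin n)} {x : Fin m} {y : Fin n}
    (hx : Sum.inl x ∈ D) (hy : Sum.inr y ∈ D) :
    IsDomSet (completeBipartiteGraph (Fin m) (Fin n)) D := by
  intro v hv
  cases v with
  | inl a => exact ⟨Sum.inr y, hy, by simp⟩
  | inr b => exact ⟨Sum.inl x, hx, by simp⟩

lemma ncard_pairlr (x : Fin m) (y : Fin n) :
    ({Sum.inl x, Sum.inr y} : Set (Fin m ⊕ Fin n)).ncard = 2 :=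
  Set.ncard_pair (by simp)

/-- the canonical vertex `{inl x, inr y}` of the 3-dominating graph. -/
def pairV (x : Fin m) (y : Fin n) :
    {D : Set (Fin m ⊕ Fin n) //
      IsDomSet (completeBipartiteGraph (Fin m) (Fin n)) D ∧ D.ncard ≤ 3} :=
  ⟨{Sum.inl x, Sum.inr y},
    dom_of_both (Set.mem_insert _ _) (Set.mem_insert_iff.mpr (Or.inr rfl)),
    by rw [ncard_pairlr]; omega⟩

lemma reach_swapR (x : Fin m) (y y' : Fin n) :
    (KDomGraph (completeBipartiteGraph (Fin m) (Fin n)) 3).Reachable (pairV x y) (pairV x y') := by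
  by_cases h : y = y'
  · subst h; exact Reachable.refl _
  · have hv1 : (Sum.inr y' : Fin m ⊕ Fin n) ∉ ({Sum.inl x, Sum.inr y} : Set (Fin m ⊕ Fin n)) := by
      simp [h]
      exact fun hcon => h (by simpa using hcon.symm)
    have hv2 : (Sum.inr y : Fin m ⊕ Fin n) ∉ ({Sum.inl x, Sum.inr y'} : Set (Fin m ⊕ Fin n)) := by
      simp
      exact fun hcon => h (by simpa using hcon)
    have hTcard : (insert (Sum.inr y') ({Sum.inl x, Sum.inr y} : Set (Fin m ⊕ Fin n))).ncard ≤ 3 := by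
      rw [Set.ncard_insert_of_notMem hv1 (Set.toFinite _), ncard_pairlr]
    have hTdom : IsDomSet (completeBipartiteGraph (Fin m) (Fin n))
        (insert (Sum.inr y') ({Sum.inl x, Sum.inr y} : Set (Fin m ⊕ Fin n))) :=
      dom_of_both (x := x) (y := y) (by simp) (by simp)
    have adj1 := kdom_adj_insert hv1 (pairV x y).2.1 (pairV x y).2.2 hTdom hTcard
    have hT2 : insert (Sum.inr y') ({Sum.inl x, Sum.inr y} : Set (Fin m ⊕ Fin n))
        = insert (Sum.inr y) ({Sum.inl x, Sum.inr y'} : Set (Fin m ⊕ Fin n)) := by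
      ext v; simp only [Set.mem_insert_iff, Set.mem_singleton_iff]; tauto
    have hTcard' : (insert (Sum.inr y) ({Sum.inl x, Sum.inr y'} : Set (Fin m ⊕ Fin n))).ncard ≤ 3 := by
      rw [← hT2]; exact hTcard
    have hTdom' : IsDomSet (completeBipartiteGraph (Fin m) (Fin n))
        (insert (Sum.inr y) ({Sum.inl x, Sum.inr y'} : Set (Fin m ⊕ Fin n))) := by
      rw [← hT2]; exact hTdom
    have adj2 := kdom_adj_insert hv2 (pairV x y').2.1 (pairV x y').2.2 hTdom' hTcard'
    have hveq : (⟨insert (Sum.inr y') ({Sum.inl x, Sum.inr y} : Set (Fin m ⊕ Fin n)), hTdom, hTcard⟩ :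
        {D : Set (Fin m ⊕ Fin n) //
          IsDomSet (completeBipartiteGraph (Fin m) (Fin n)) D ∧ D.ncard ≤ 3})
        = ⟨insert (Sum.inr y) ({Sum.inl x, Sum.inr y'} : Set (Fin m ⊕ Fin n)), hTdom', hTcard'⟩ :=
      Subtype.ext hT2
    rw [hveq] at adj1
    exact adj1.reachable.trans adj2.symm.reachable

lemma reach_swapL (x x' : Fin m) (y : Fin n) :
    (KDomGraph (completeBipartiteGraph (Fin m) (Fin n)) 3).Reachable (pairV x y) (pairV x' y) := by
  by_cases h : x = x'
  · subst h; exact Reachable.refl _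
  · have hv1 : (Sum.inl x' : Fin m ⊕ Fin n) ∉ ({Sum.inl x, Sum.inr y} : Set (Fin m ⊕ Fin n)) := by
      simp
      exact fun hcon => h (by simpa using hcon.symm)
    have hv2 : (Sum.inl x : Fin m ⊕ Fin n) ∉ ({Sum.inl x', Sum.inr y} : Set (Fin m ⊕ Fin n)) := by
      simp
      exact fun hcon => h (by simpa using hcon)
    have hTcard : (insert (Sum.inl x') ({Sum.inl x, Sum.inr y} : Set (Fin m ⊕ Fin n))).ncard ≤ 3 := by
      rw [Set.ncard_insert_of_notMem hv1 (Set.toFinite _), ncard_pairlr]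
    have hTdom : IsDomSet (completeBipartiteGraph (Fin m) (Fin n))
        (insert (Sum.inl x') ({Sum.inl x, Sum.inr y} : Set (Fin m ⊕ Fin n))) :=
      dom_of_both (x := x) (y := y) (by simp) (by simp)
    have adj1 := kdom_adj_insert hv1 (pairV x y).2.1 (pairV x y).2.2 hTdom hTcard
    have hT2 : insert (Sum.inl x') ({Sum.inl x, Sum.inr y} : Set (Fin m ⊕ Fin n))
        = insert (Sum.inl x) ({Sum.inl x', Sum.inr y} : Set (Fin m ⊕ Fin n)) := by
      ext v; simp only [Set.mem_insert_iff, Set.mem_singleton_iff]; tauto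
    have hTcard' : (insert (Sum.inl x) ({Sum.inl x', Sum.inr y} : Set (Fin m ⊕ Fin n))).ncard ≤ 3 := by
      rw [← hT2]; exact hTcard
    have hTdom' : IsDomSet (completeBipartiteGraph (Fin m) (Fin n))
        (insert (Sum.inl x) ({Sum.inl x', Sum.inr y} : Set (Fin m ⊕ Fin n))) := by
      rw [← hT2]; exact hTdom
    have adj2 := kdom_adj_insert hv2 (pairV x' y).2.1 (pairV x' y).2.2 hTdom' hTcard'
    have hveq : (⟨insert (Sum.inl x') ({Sum.inl x, Sum.inr y} : Set (Fin m ⊕ Fin n)), hTdom, hTcard⟩ :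
        {D : Set (Fin m ⊕ Fin n) //
          IsDomSet (completeBipartiteGraph (Fin m) (Fin n)) D ∧ D.ncard ≤ 3})
        = ⟨insert (Sum.inl x) ({Sum.inl x', Sum.inr y} : Set (Fin m ⊕ Fin n)), hTdom', hTcard'⟩ :=
      Subtype.ext hT2
    rw [hveq] at adj1
    exact adj1.reachable.trans adj2.symm.reachable

lemma reach_pair (x x' : Fin m) (y y' : Fin n) :
    (KDomGraph (completeBipartiteGraph (Fin m) (Fin n)) 3).Reachable (pairV x y) (pairV x' y') :=
  (reach_swapR x y y').trans (reach_swapL x x' y')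

end CaseTwo

section CaseTwo2
variable {m n : ℕ}

lemma reach_to_pair (hm : 1 ≤ m) (hn : 1 ≤ n)
    (A : {D : Set (Fin m ⊕ Fin n) //
      IsDomSet (completeBipartiteGraph (Fin m) (Fin n)) D ∧ D.ncard ≤ 3})
    (hL : (PL A.1).Nonempty) (hR : (PR A.1).Nonempty) :
    ∃ (x : Fin m) (y : Fin n),
      (KDomGraph (completeBipartiteGraph (Fin m) (Fin n)) 3).Reachable A (pairV x y) := by
  obtain ⟨D, hdom, hle⟩ := A
  simp only at hL hR
  have hsplit := ncard_split D
  have ha1 : 1 ≤ (PL D).ncard := (Set.ncard_pos (Set.toFinite _)).mpr hL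
  have hb1 : 1 ≤ (PR D).ncard := (Set.ncard_pos (Set.toFinite _)).mpr hR
  by_cases h2 : D.ncard = 2
  · -- a = b = 1
    have ha : (PL D).ncard = 1 := by omega
    have hb : (PR D).ncard = 1 := by omega
    obtain ⟨x, hx⟩ := Set.ncard_eq_one.mp ha
    obtain ⟨y, hy⟩ := Set.ncard_eq_one.mp hb
    have hD : D = {Sum.inl x, Sum.inr y} := by
      conv_lhs => rw [D_eq_split D, hx, hy]
      ext v
      simp
      tauto
    refine ⟨x, y, ?_⟩
    have : (⟨D, hdom, hle⟩ : {D : Set (Fin m ⊕ Fin n) //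
        IsDomSet (completeBipartiteGraph (Fin m) (Fin n)) D ∧ D.ncard ≤ 3}) = pairV x y :=
      Subtype.ext hD
    rw [this]
  · have h3 : D.ncard = 3 := by omega
    by_cases ha2 : (PL D).ncard = 2
    · -- shape (2,1)
      have hb : (PR D).ncard = 1 := by omega
      obtain ⟨x1, x2, hx12, hPL⟩ := Set.ncard_eq_two.mp ha2
      obtain ⟨y, hy⟩ := Set.ncard_eq_one.mp hb
      have hD : D = {Sum.inl x1, Sum.inl x2, Sum.inr y} := by
        conv_lhs => rw [D_eq_split D, hPL, hy]
        ext v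
        simp
        tauto
      have hmem : Sum.inl x1 ∈ D := by rw [hD]; simp
      have hD' : D \ {Sum.inl x1} = {Sum.inl x2, Sum.inr y} := by
        rw [hD]
        ext v
        simp only [Set.mem_diff, Set.mem_insert_iff, Set.mem_singleton_iff]
        constructor
        · rintro ⟨h | h | h, hne⟩ <;> tauto
        · rintro (rfl | rfl)
          · exact ⟨Or.inr (Or.inl rfl), by simp [Ne.symm hx12]⟩
          · exact ⟨Or.inr (Or.inr rfl), by simp⟩
      have hdom' : IsDomSet (completeBipartiteGraph (Fin m) (Fin n)) (D \ {Sum.inl x1}) := by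
        rw [hD']
        exact dom_of_both (Set.mem_insert _ _) (Set.mem_insert_iff.mpr (Or.inr rfl))
      have hle' : (D \ {Sum.inl x1}).ncard ≤ 3 := by
        rw [hD', ncard_pairlr]; omega
      have hadj := kdom_adj_diff hmem hdom hle hdom' hle'
      have hveq : (⟨D \ {Sum.inl x1}, hdom', hle'⟩ : {D : Set (Fin m ⊕ Fin n) //
          IsDomSet (completeBipartiteGraph (Fin m) (Fin n)) D ∧ D.ncard ≤ 3}) = pairV x2 y :=
        Subtype.ext hD'
      rw [hveq] at hadj
      exact ⟨x2, y, hadj.reachable⟩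
    · -- shape (1,2)
      have ha : (PL D).ncard = 1 := by omega
      have hb2 : (PR D).ncard = 2 := by omega
      obtain ⟨x, hx⟩ := Set.ncard_eq_one.mp ha
      obtain ⟨y1, y2, hy12, hPR⟩ := Set.ncard_eq_two.mp hb2
      have hD : D = {Sum.inl x, Sum.inr y1, Sum.inr y2} := by
        conv_lhs => rw [D_eq_split D, hx, hPR]
        ext v
        simp
        tauto
      have hmem : Sum.inr y1 ∈ D := by rw [hD]; simp
      have hD' : D \ {Sum.inr y1} = {Sum.inl x, Sum.inr y2} := by
        rw [hD]
        ext v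
        simp only [Set.mem_diff, Set.mem_insert_iff, Set.mem_singleton_iff]
        constructor
        · rintro ⟨h | h | h, hne⟩ <;> tauto
        · rintro (rfl | rfl)
          · exact ⟨Or.inl rfl, by simp⟩
          · exact ⟨Or.inr (Or.inr rfl), by simp [Ne.symm hy12]⟩
      have hdom' : IsDomSet (completeBipartiteGraph (Fin m) (Fin n)) (D \ {Sum.inr y1}) := by
        rw [hD']
        exact dom_of_both (Set.mem_insert _ _) (Set.mem_insert_iff.mpr (Or.inr rfl))
      have hle' : (D \ {Sum.inr y1}).ncard ≤ 3 := by
        rw [hD', ncard_pairlr]; omega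
      have hadj := kdom_adj_diff hmem hdom hle hdom' hle'
      have hveq : (⟨D \ {Sum.inr y1}, hdom', hle'⟩ : {D : Set (Fin m ⊕ Fin n) //
          IsDomSet (completeBipartiteGraph (Fin m) (Fin n)) D ∧ D.ncard ≤ 3}) = pairV x y2 :=
        Subtype.ext hD'
      rw [hveq] at hadj
      exact ⟨x, y2, hadj.reachable⟩

lemma adj_parts_nonempty (hm3 : 3 ≤ m) (hmn : m ≤ n)
    {A B : {D : Set (Fin m ⊕ Fin n) //
      IsDomSet (completeBipartiteGraph (Fin m) (Fin n)) D ∧ D.ncard ≤ 3}}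
    (hAdj : (KDomGraph (completeBipartiteGraph (Fin m) (Fin n)) 3).Adj A B) :
    (PL A.1).Nonempty ∧ (PR A.1).Nonempty := by
  have hm1 : (1:ℕ) ≤ m := by omega
  have hn1 : (1:ℕ) ≤ n := by omega
  obtain ⟨D, hdom, hle⟩ := A
  simp only
  have hd := (isDom_ncard_iff hm1 hn1).mp hdom
  have hsplit := ncard_split D
  have ha : (PL D).ncard ≤ m := PL_le
  have hb : (PR D).ncard ≤ n := PR_le
  have hadj' : (symmDiff D B.1).ncard = 1 := hAdj
  rw [symmDiff_ncard_one] at hadj'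
  have hBle := B.2.2
  have hBdom := B.2.1
  rcases hd with ⟨h1, h2⟩ | hP | hP
  · constructor
    · exact (Set.ncard_pos (Set.toFinite _)).mp (by omega)
    · exact (Set.ncard_pos (Set.toFinite _)).mp (by omega)
  · -- (PL D).ncard = m ≥ 3: D = L, leads to contradiction
    exfalso
    have hbz : (PR D).ncard = 0 := by omega
    have hPRe : PR D = ∅ := (Set.ncard_eq_zero (Set.toFinite _)).mp hbz
    rcases hadj' with ⟨v, hv, hBv⟩ | ⟨v, hv, hBv⟩
    · rw [hBv, Set.ncard_insert_of_notMem hv (Set.toFinite _)] at hBle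
      omega
    · rw [hBv] at hBdom
      cases v with
      | inr y =>
        have : y ∈ PR D := hv
        rw [hPRe] at this
        exact Set.notMem_empty _ this
      | inl xx =>
        rw [isDom_ncard_iff hm1 hn1, PL_diff_inl, PR_diff_inl] at hBdom
        have hxx : xx ∈ PL D := hv
        rw [Set.ncard_diff_singleton_of_mem hxx] at hBdom
        omega
  · exfalso
    have haz : (PL D).ncard = 0 := by omega
    have hPLe : PL D = ∅ := (Set.ncard_eq_zero (Set.toFinite _)).mp haz
    rcases hadj' with ⟨v, hv, hBv⟩ | ⟨v, hv, hBv⟩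
    · rw [hBv, Set.ncard_insert_of_notMem hv (Set.toFinite _)] at hBle
      omega
    · rw [hBv] at hBdom
      cases v with
      | inl xx =>
        have : xx ∈ PL D := hv
        rw [hPLe] at this
        exact Set.notMem_empty _ this
      | inr y =>
        rw [isDom_ncard_iff hm1 hn1, PL_diff_inr, PR_diff_inr] at hBdom
        have hyy : y ∈ PR D := hv
        rw [Set.ncard_diff_singleton_of_mem hyy] at hBdom
        omega

lemma eulerian_case2 (hm3 : 3 ≤ m) (hmn : m ≤ n) (hpar : m % 2 = n % 2) :
    IsEulerian (KDomGraph (completeBipartiteGraph (Fin m) (Fin n)) 3) := by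
  have hm1 : (1:ℕ) ≤ m := by omega
  have hn1 : (1:ℕ) ≤ n := by omega
  constructor
  · rintro ⟨D, hD, hle⟩
    rw [Nat.even_iff, deg_formula hm1 hn1 hD hle]
    have hdom := (isDom_ncard_iff hm1 hn1).mp hD
    have hsplit := ncard_split D
    have ha : (PL D).ncard ≤ m := PL_le
    have hb : (PR D).ncard ≤ n := PR_le
    split_ifs <;> omega
  · rintro u v x y huv hxy
    obtain ⟨hL1, hR1⟩ := adj_parts_nonempty hm3 hmn huv
    obtain ⟨hL2, hR2⟩ := adj_parts_nonempty hm3 hmn hxy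
    obtain ⟨x1, y1, h1⟩ := reach_to_pair hm1 hn1 u hL1 hR1
    obtain ⟨x2, y2, h2⟩ := reach_to_pair hm1 hn1 x hL2 hR2
    exact h1.trans ((reach_pair x1 x2 y1 y2).trans h2.symm)

end CaseTwo2


/-- For `1 ≤ m ≤ n` and `γ(K_{m,n}) < k < m + n`, the `k`-dominating graph of the
complete bipartite graph `K_{m,n}` is Eulerian iff `m = 1`, `n` is even and `k` is odd,
or `m ≥ 3`, `m ≡ n (mod 2)` and `k = 3`. -/
theorem kDomGraph_completeBipartite_eulerian_iff (m n k : ℕ) (hm : 1 ≤ m) (hmn : m ≤ n)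
    (hk1 : domNumber (completeBipartiteGraph (Fin m) (Fin n)) < k) (hk2 : k < m + n) :
    IsEulerian (KDomGraph (completeBipartiteGraph (Fin m) (Fin n)) k) ↔
      (m = 1 ∧ Even n ∧ Odd k) ∨ (3 ≤ m ∧ m % 2 = n % 2 ∧ k = 3) := by
  have hn1 : 1 ≤ n := le_trans hm hmn
  constructor
  · intro hEul
    by_cases hm1 : m = 1
    · left
      subst hm1
      have h2k : 2 ≤ k := by have := one_le_domNumber le_rfl hn1; omega
      have hkn : k ≤ n := by omega
      refine ⟨rfl, ?_, ?_⟩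
      · -- n even, via D = {inl 0}
        obtain ⟨D, hPLD, hPRD⟩ := exists_D (m:=1) (n:=n) 1 0 le_rfl (by omega)
        have hdom : IsDomSet (completeBipartiteGraph (Fin 1) (Fin n)) D :=
          (isDom_ncard_iff le_rfl hn1).mpr (Or.inr (Or.inl hPLD))
        have hsplit := ncard_split D
        have hle : D.ncard ≤ k := by omega
        have hev := hEul.1 ⟨D, hdom, hle⟩
        rw [deg_formula le_rfl hn1 hdom hle, Nat.even_iff] at hev
        rw [Nat.even_iff]
        rw [hPLD, hPRD] at hev
        split_ifs at hev <;> omega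
      · -- k odd, via D of size k
        obtain ⟨D, hPLD, hPRD⟩ := exists_D (m:=1) (n:=n) 1 (k-1) le_rfl (by omega)
        have hdom : IsDomSet (completeBipartiteGraph (Fin 1) (Fin n)) D :=
          (isDom_ncard_iff le_rfl hn1).mpr (Or.inr (Or.inl hPLD))
        have hsplit := ncard_split D
        have hle : D.ncard ≤ k := by omega
        have hev := hEul.1 ⟨D, hdom, hle⟩
        rw [deg_formula le_rfl hn1 hdom hle, Nat.even_iff] at hev
        rw [Nat.odd_iff]
        rw [hPLD, hPRD] at hev
        split_ifs at hev <;> omega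
    · right
      have hm2 : 2 ≤ m := by omega
      have hn2 : 2 ≤ n := by omega
      have hm1' : (1:ℕ) ≤ m := by omega
      have h3k : 3 ≤ k := by have := two_le_domNumber hm2 hn2; omega
      have hpar : (m + n) % 2 = 0 := by
        obtain ⟨D, hPLD, hPRD⟩ := exists_D (m:=m) (n:=n) 1 1 (by omega) (by omega)
        have hdom : IsDomSet (completeBipartiteGraph (Fin m) (Fin n)) D :=
          (isDom_ncard_iff hm1' hn1).mpr (Or.inl (by omega))
        have hsplit := ncard_split D
        have hle : D.ncard ≤ k := by omega
        have hev := hEul.1 ⟨D, hdom, hle⟩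
        rw [deg_formula hm1' hn1 hdom hle, Nat.even_iff] at hev
        rw [hPLD, hPRD] at hev
        split_ifs at hev <;> omega
      have hk3 : k = 3 := by
        by_contra hne
        have h4k : 4 ≤ k := by omega
        have hn3 : 3 ≤ n := by omega
        obtain ⟨D, hPLD, hPRD⟩ := exists_D (m:=m) (n:=n) 1 2 (by omega) (by omega)
        have hdom : IsDomSet (completeBipartiteGraph (Fin m) (Fin n)) D :=
          (isDom_ncard_iff hm1' hn1).mpr (Or.inl (by omega))
        have hsplit := ncard_split D
        have hle : D.ncard ≤ k := by omega
        have hev := hEul.1 ⟨D, hdom, hle⟩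
        rw [deg_formula hm1' hn1 hdom hle, Nat.even_iff] at hev
        rw [hPLD, hPRD] at hev
        split_ifs at hev <;> omega
      have hm3 : 3 ≤ m := by
        by_contra hne
        have hm2' : m = 2 := by omega
        obtain ⟨D, hPLD, hPRD⟩ := exists_D (m:=m) (n:=n) 2 1 (by omega) (by omega)
        have hdom : IsDomSet (completeBipartiteGraph (Fin m) (Fin n)) D :=
          (isDom_ncard_iff hm1' hn1).mpr (Or.inl (by omega))
        have hsplit := ncard_split D
        have hle : D.ncard ≤ k := by omega
        have hev := hEul.1 ⟨D, hdom, hle⟩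
        rw [deg_formula hm1' hn1 hdom hle, Nat.even_iff] at hev
        rw [hPLD, hPRD] at hev
        split_ifs at hev <;> omega
      exact ⟨hm3, by omega, hk3⟩
  · rintro (⟨hm1, hnev, hkod⟩ | ⟨hm3, hpar, hk3⟩)
    · subst hm1
      have h2k : 2 ≤ k := by have := one_le_domNumber le_rfl hn1; omega
      exact eulerian_case1 (Nat.even_iff.mp hnev) (Nat.odd_iff.mp hkod) h2k (by omega)
    · subst hk3
      exact eulerian_case2 hm3 hmn hpar
end

section
/- Let n ≥ 4 be an even integer, let H_n be the cocktail party graph on n vertices, and let k be an integer with 2 < k < n. Then the k-dominating graph D_k(H_n) is Eulerian if and only if k is even. -/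
open SimpleGraph

/-- `G` is a cocktail party graph: the complete graph with a perfect matching removed,
i.e. there is a fixed-point-free involutive pairing `f` of the vertices such that two
distinct vertices are adjacent iff they are not paired. -/
def IsCocktailParty {V : Type*} (G : SimpleGraph V) : Prop :=
  ∃ f : V → V, Function.Involutive f ∧ (∀ v, f v ≠ v) ∧
    ∀ u v, G.Adj u v ↔ u ≠ v ∧ f u ≠ v

section Aux

variable {V : Type*} [Fintype V] {G : SimpleGraph V} {k : ℕ}

lemma isDomSet_iff_two_le (hG : IsCocktailParty G) (hn : 4 ≤ Fintype.card V) (D : Set V) :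
    IsDomSet G D ↔ 2 ≤ D.ncard := by
  obtain ⟨f, hfi, hff, hfadj⟩ := hG
  constructor
  · intro hD
    by_contra h
    push_neg at h
    have hle : D.ncard ≤ 1 := by omega
    have hall : ∀ a ∈ D, ∀ b ∈ D, a = b := (Set.ncard_le_one D.toFinite).mp hle
    rcases D.eq_empty_or_nonempty with hE | ⟨u, hu⟩
    · have : Nonempty V := by
        have : 0 < Fintype.card V := by omega
        exact Fintype.card_pos_iff.mp this
      obtain ⟨v⟩ := this
      obtain ⟨w, hw, -⟩ := hD v (by simp [hE])
      simp [hE] at hw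
    · have hfu : f u ∉ D := fun hmem => hff u (hall _ hmem _ hu)
      obtain ⟨w, hw, hadj⟩ := hD (f u) hfu
      have hwu : w = u := hall _ hw _ hu
      subst hwu
      rw [hfadj] at hadj
      exact hadj.2 rfl
  · intro h2 v hv
    obtain ⟨a, ha, b, hb, hab⟩ := (Set.one_lt_ncard D.toFinite).mp h2
    by_cases hfa : f a = v
    · refine ⟨b, hb, (hfadj b v).mpr ⟨fun h => hv (h ▸ hb), fun h => ?_⟩⟩
      exact hab (hfi.injective (by rw [hfa, h]))
    · exact ⟨a, ha, (hfadj a v).mpr ⟨fun h => hv (h ▸ ha), hfa⟩⟩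

lemma symmDiff_singleton_of_mem {A : Set V} {v : V} (hv : v ∈ A) :
    symmDiff A {v} = A \ {v} := by
  ext x
  simp only [Set.symmDiff_def, Set.sup_eq_union, Set.mem_union, Set.mem_diff,
    Set.mem_singleton_iff]
  constructor
  · rintro (h | ⟨rfl, h⟩)
    · exact h
    · exact absurd hv h
  · exact Or.inl

lemma symmDiff_singleton_of_not_mem {A : Set V} {v : V} (hv : v ∉ A) :
    symmDiff A {v} = insert v A := by
  ext x
  simp only [Set.symmDiff_def, Set.sup_eq_union, Set.mem_union, Set.mem_diff,
    Set.mem_singleton_iff, Set.mem_insert_iff]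
  constructor
  · rintro (⟨h, -⟩ | ⟨rfl, -⟩)
    · exact Or.inr h
    · exact Or.inl rfl
  · rintro (rfl | h)
    · exact Or.inr ⟨rfl, hv⟩
    · exact Or.inl ⟨h, fun he => hv (he ▸ h)⟩

lemma kdom_adj_iff {A B : {D : Set V // IsDomSet G D ∧ D.ncard ≤ k}} :
    (KDomGraph G k).Adj A B ↔ ∃ v, B.1 = symmDiff A.1 {v} := by
  show (symmDiff A.1 B.1).ncard = 1 ↔ _
  rw [Set.ncard_eq_one]
  constructor
  · rintro ⟨v, hv⟩
    exact ⟨v, by rw [← hv, symmDiff_symmDiff_cancel_left]⟩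
  · rintro ⟨v, hv⟩
    exact ⟨v, by rw [hv, symmDiff_symmDiff_cancel_left]⟩

/-- The key neighbourhood description. -/
lemma kdom_nbr_image (hG : IsCocktailParty G) (hn : 4 ≤ Fintype.card V)
    (A : {D : Set V // IsDomSet G D ∧ D.ncard ≤ k}) :
    Subtype.val '' ((KDomGraph G k).neighborSet A) =
      (fun v => symmDiff A.1 {v}) ''
        {v | (v ∈ A.1 ∧ 3 ≤ A.1.ncard) ∨ (v ∉ A.1 ∧ A.1.ncard < k)} := by
  ext B
  simp only [Set.mem_image, SimpleGraph.mem_neighborSet, Set.mem_setOf_eq]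
  constructor
  · rintro ⟨⟨B, hBdom, hBk⟩, hadj, rfl⟩
    obtain ⟨v, hv⟩ := kdom_adj_iff.mp hadj
    refine ⟨v, ?_, hv.symm⟩
    by_cases hvA : v ∈ A.1
    · left
      refine ⟨hvA, ?_⟩
      have hB2 : 2 ≤ B.ncard := (isDomSet_iff_two_le hG hn B).mp hBdom
      have hv' : B = symmDiff A.1 {v} := hv
      have : B = A.1 \ {v} := by rw [hv', symmDiff_singleton_of_mem hvA]
      have hcard : B.ncard = A.1.ncard - 1 := by
        rw [this, Set.ncard_diff_singleton_of_mem hvA]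
      have hA1 : 1 ≤ A.1.ncard := by
        have := Set.ncard_diff_singleton_le A.1 v
        omega
      omega
    · right
      refine ⟨hvA, ?_⟩
      have hv' : B = symmDiff A.1 {v} := hv
      have : B = insert v A.1 := by rw [hv', symmDiff_singleton_of_not_mem hvA]
      have hcard : B.ncard = A.1.ncard + 1 := by
        rw [this, Set.ncard_insert_of_notMem hvA A.1.toFinite]
      omega
  · rintro ⟨v, hv, rfl⟩
    have hA2 : 2 ≤ A.1.ncard := (isDomSet_iff_two_le hG hn A.1).mp A.2.1
    rcases hv with ⟨hvA, h3⟩ | ⟨hvA, hlt⟩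
    · have heq : symmDiff A.1 {v} = A.1 \ {v} := symmDiff_singleton_of_mem hvA
      have hcard : (symmDiff A.1 {v}).ncard = A.1.ncard - 1 := by
        rw [heq, Set.ncard_diff_singleton_of_mem hvA]
      refine ⟨⟨symmDiff A.1 {v}, ?_, ?_⟩, kdom_adj_iff.mpr ⟨v, rfl⟩, rfl⟩
      · rw [isDomSet_iff_two_le hG hn]; omega
      · have := A.2.2; omega
    · have heq : symmDiff A.1 {v} = insert v A.1 := symmDiff_singleton_of_not_mem hvA
      have hcard : (symmDiff A.1 {v}).ncard = A.1.ncard + 1 := by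
        rw [heq, Set.ncard_insert_of_notMem hvA A.1.toFinite]
      refine ⟨⟨symmDiff A.1 {v}, ?_, ?_⟩, kdom_adj_iff.mpr ⟨v, rfl⟩, rfl⟩
      · rw [isDomSet_iff_two_le hG hn]; omega
      · omega

lemma kdom_degree (hG : IsCocktailParty G) (hn : 4 ≤ Fintype.card V)
    (A : {D : Set V // IsDomSet G D ∧ D.ncard ≤ k}) :
    ((KDomGraph G k).neighborSet A).ncard =
      ({v | (v ∈ A.1 ∧ 3 ≤ A.1.ncard) ∨ (v ∉ A.1 ∧ A.1.ncard < k)} : Set V).ncard := by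
  have h1 : ((KDomGraph G k).neighborSet A).ncard
      = (Subtype.val '' ((KDomGraph G k).neighborSet A)).ncard :=
    (Set.ncard_image_of_injective _ Subtype.val_injective).symm
  rw [h1, kdom_nbr_image hG hn A]
  exact Set.ncard_image_of_injOn
    (fun x _ y _ h => Set.singleton_injective (symmDiff_right_injective A.1 h))

lemma kdom_reach_two (hG : IsCocktailParty G) (hn : 4 ≤ Fintype.card V) :
    ∀ m (A : {D : Set V // IsDomSet G D ∧ D.ncard ≤ k}), A.1.ncard = m →
      ∃ B, B.1.ncard = 2 ∧ (KDomGraph G k).Reachable A B := by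
  intro m
  induction m using Nat.strong_induction_on with
  | _ m ih =>
    intro A hA
    have hA2 : 2 ≤ A.1.ncard := (isDomSet_iff_two_le hG hn A.1).mp A.2.1
    by_cases h2 : m = 2
    · exact ⟨A, by omega, SimpleGraph.Reachable.refl A⟩
    · have h3 : 3 ≤ A.1.ncard := by omega
      obtain ⟨v, hv⟩ : A.1.Nonempty := by
        rw [← Set.ncard_pos A.1.toFinite]; omega
      have hcard : (A.1 \ {v}).ncard = m - 1 := by
        rw [Set.ncard_diff_singleton_of_mem hv]; omega
      have hdom : IsDomSet G (A.1 \ {v}) := by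
        rw [isDomSet_iff_two_le hG hn]; omega
      set B : {D : Set V // IsDomSet G D ∧ D.ncard ≤ k} :=
        ⟨A.1 \ {v}, hdom, by have := A.2.2; omega⟩ with hBdef
      have hadj : (KDomGraph G k).Adj A B :=
        kdom_adj_iff.mpr ⟨v, (symmDiff_singleton_of_mem hv).symm⟩
      obtain ⟨C, hC2, hreach⟩ := ih (m - 1) (by omega) B hcard
      exact ⟨C, hC2, hadj.reachable.trans hreach⟩

lemma kdom_swap (hG : IsCocktailParty G) (hn : 4 ≤ Fintype.card V) (hk1 : 2 < k)
    (A B : {D : Set V // IsDomSet G D ∧ D.ncard ≤ k}) (a b c : V)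
    (hA : A.1 = {a, b}) (hB : B.1 = {c, b}) (hab : a ≠ b) (hcb : c ≠ b) :
    (KDomGraph G k).Reachable A B := by
  by_cases hac : a = c
  · have : A = B := Subtype.ext (by rw [hA, hB, hac])
    rw [this]
  · have hcAB : c ∉ ({a, b} : Set V) := by
      simp only [Set.mem_insert_iff, Set.mem_singleton_iff]
      push_neg
      exact ⟨fun h => hac h.symm, hcb⟩
    have hMeq : ({a, b, c} : Set V) = insert c {a, b} := by
      ext x
      simp only [Set.mem_insert_iff, Set.mem_singleton_iff]
      tauto
    have hM3 : ({a, b, c} : Set V).ncard = 3 := by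
      rw [hMeq, Set.ncard_insert_of_notMem hcAB (Set.toFinite _), Set.ncard_pair hab]
    have hMdom : IsDomSet G ({a, b, c} : Set V) := by
      rw [isDomSet_iff_two_le hG hn, hM3]; omega
    set M : {D : Set V // IsDomSet G D ∧ D.ncard ≤ k} :=
      ⟨{a, b, c}, hMdom, by omega⟩ with hMdef
    have hadj1 : (KDomGraph G k).Adj A M := by
      refine kdom_adj_iff.mpr ⟨c, ?_⟩
      show ({a, b, c} : Set V) = symmDiff A.1 {c}
      rw [hA, symmDiff_singleton_of_not_mem hcAB]
      exact hMeq
    have hadj2 : (KDomGraph G k).Adj M B := by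
      refine kdom_adj_iff.mpr ⟨a, ?_⟩
      show B.1 = symmDiff M.1 {a}
      have ha : a ∈ M.1 := by left; rfl
      rw [symmDiff_singleton_of_mem ha, hB]
      ext x
      simp only [Set.mem_insert_iff, Set.mem_singleton_iff, Set.mem_diff]
      constructor
      · rintro (rfl | rfl)
        · exact ⟨Or.inr (Or.inr rfl), fun h => hac h.symm⟩
        · exact ⟨Or.inr (Or.inl rfl), fun h => hab h.symm⟩
      · rintro ⟨rfl | rfl | rfl, hx⟩
        · exact absurd rfl hx
        · exact Or.inr rfl
        · exact Or.inl rfl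
    exact hadj1.reachable.trans hadj2.reachable

lemma kdom_pair (hG : IsCocktailParty G) (hn : 4 ≤ Fintype.card V) (hk1 : 2 < k)
    (A B : {D : Set V // IsDomSet G D ∧ D.ncard ≤ k}) (a b c d : V)
    (hA : A.1 = {a, b}) (hB : B.1 = {c, d}) (hab : a ≠ b) (hcd : c ≠ d) :
    (KDomGraph G k).Reachable A B := by
  by_cases hda : d = a
  · exact kdom_swap hG hn hk1 A B b a c (by rw [hA, Set.pair_comm])
      (by rw [hB, hda]) (Ne.symm hab) (fun h => hcd (h.trans hda.symm))
  · have hMdom : IsDomSet G ({a, d} : Set V) := by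
      rw [isDomSet_iff_two_le hG hn, Set.ncard_pair (Ne.symm hda)]
    set M : {D : Set V // IsDomSet G D ∧ D.ncard ≤ k} :=
      ⟨{a, d}, hMdom, by rw [Set.ncard_pair (Ne.symm hda)]; omega⟩ with hMdef
    have h1 : (KDomGraph G k).Reachable A M :=
      kdom_swap hG hn hk1 A M b a d (by rw [hA, Set.pair_comm])
        (by show ({a, d} : Set V) = {d, a}; rw [Set.pair_comm]) (Ne.symm hab) hda
    have h2 : (KDomGraph G k).Reachable M B :=
      kdom_swap hG hn hk1 M B a d c rfl hB (fun h => hda h.symm) hcd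
    exact h1.trans h2

lemma kdom_connected (hG : IsCocktailParty G) (hn : 4 ≤ Fintype.card V) (hk1 : 2 < k)
    (A B : {D : Set V // IsDomSet G D ∧ D.ncard ≤ k}) :
    (KDomGraph G k).Reachable A B := by
  obtain ⟨A2, hA2, hrA⟩ := kdom_reach_two hG hn A.1.ncard A rfl
  obtain ⟨B2, hB2, hrB⟩ := kdom_reach_two hG hn B.1.ncard B rfl
  obtain ⟨a, b, hab, hAe⟩ := Set.ncard_eq_two.mp hA2
  obtain ⟨c, d, hcd, hBe⟩ := Set.ncard_eq_two.mp hB2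
  exact hrA.trans ((kdom_pair hG hn hk1 A2 B2 a b c d hAe hBe hab hcd).trans hrB.symm)

end Aux

/-- For the cocktail party graph on an even number `n ≥ 4` of vertices and `2 < k < n`,
the `k`-dominating graph is Eulerian iff `k` is even. -/
theorem kDomGraph_cocktailParty_eulerian_iff {V : Type*} [Fintype V] (G : SimpleGraph V)
    (hn : 4 ≤ Fintype.card V) (hne : Even (Fintype.card V)) (hG : IsCocktailParty G)
    (k : ℕ) (hk1 : 2 < k) (hk2 : k < Fintype.card V) :
    IsEulerian (KDomGraph G k) ↔ Even k := by
  have hcard : (Set.univ : Set V).ncard = Fintype.card V := by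
    rw [Set.ncard_univ, Nat.card_eq_fintype_card]
  constructor
  · rintro ⟨hdeg, -⟩
    obtain ⟨D, -, hDk⟩ := Set.exists_subset_card_eq
      (s := (Set.univ : Set V)) (n := k) (by omega)
    have hDdom : IsDomSet G D := (isDomSet_iff_two_le hG hn D).mpr (by omega)
    set A : {D : Set V // IsDomSet G D ∧ D.ncard ≤ k} := ⟨D, hDdom, hDk.le⟩ with hAdef
    have h := hdeg A
    rw [kdom_degree hG hn A] at h
    have hset : {v | (v ∈ A.1 ∧ 3 ≤ A.1.ncard) ∨ (v ∉ A.1 ∧ A.1.ncard < k)} = D := by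
      ext v
      simp only [Set.mem_setOf_eq, hAdef]
      show (v ∈ D ∧ 3 ≤ D.ncard) ∨ (v ∉ D ∧ D.ncard < k) ↔ v ∈ D
      rw [hDk]
      constructor
      · rintro (⟨h, -⟩ | ⟨-, hlt⟩)
        · exact h
        · omega
      · intro h
        exact Or.inl ⟨h, by omega⟩
    rwa [hset, hDk] at h
  · intro hke
    refine ⟨fun A => ?_, fun u v x y _ _ => kdom_connected hG hn hk1 u x⟩
    rw [kdom_degree hG hn A]
    have hA2 : 2 ≤ A.1.ncard := (isDomSet_iff_two_le hG hn A.1).mp A.2.1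
    have hAk : A.1.ncard ≤ k := A.2.2
    by_cases hd2 : A.1.ncard = 2
    · have hset : {v | (v ∈ A.1 ∧ 3 ≤ A.1.ncard) ∨ (v ∉ A.1 ∧ A.1.ncard < k)} = A.1ᶜ := by
        ext v
        simp only [Set.mem_setOf_eq, Set.mem_compl_iff]
        constructor
        · rintro (⟨-, h3⟩ | ⟨h, -⟩)
          · omega
          · exact h
        · intro h
          exact Or.inr ⟨h, by omega⟩
      rw [hset]
      have hsum := Set.ncard_add_ncard_compl A.1 A.1.toFinite
      rw [Nat.card_eq_fintype_card] at hsum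
      rw [Nat.even_iff] at hne ⊢
      omega
    · by_cases hdk : A.1.ncard = k
      · have hset : {v | (v ∈ A.1 ∧ 3 ≤ A.1.ncard) ∨ (v ∉ A.1 ∧ A.1.ncard < k)} = A.1 := by
          ext v
          simp only [Set.mem_setOf_eq]
          constructor
          · rintro (⟨h, -⟩ | ⟨-, hlt⟩)
            · exact h
            · omega
          · intro h
            exact Or.inl ⟨h, by omega⟩
        rw [hset, hdk]
        exact hke
      · have hset : {v | (v ∈ A.1 ∧ 3 ≤ A.1.ncard) ∨ (v ∉ A.1 ∧ A.1.ncard < k)}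
            = (Set.univ : Set V) := by
          ext v
          simp only [Set.mem_setOf_eq, Set.mem_univ, iff_true]
          by_cases h : v ∈ A.1
          · exact Or.inl ⟨h, by omega⟩
          · exact Or.inr ⟨h, by omega⟩
        rw [hset, hcard]
        exact hne
end

section
/- Let n and k be integers with n ≥ 2 and 1 < k < n. Then the k-dominating graph D_k(K_n) of the complete graph K_n is Eulerian if and only if n is odd and k = 2. -/
open SimpleGraph

/-! ### Auxiliary lemmas -/

private lemma symmDiff_singleton_of_not_mem_s15 {α : Type*} (A : Set α) (x : α) (h : x ∉ A) :
    symmDiff A {x} = insert x A := by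
  ext y
  simp only [Set.symmDiff_def, Set.mem_union, Set.mem_diff, Set.mem_singleton_iff,
    Set.mem_insert_iff]
  by_cases hy : y = x <;> simp [hy, h]

private lemma symmDiff_singleton_of_mem_s15 {α : Type*} (A : Set α) (x : α) (h : x ∈ A) :
    symmDiff A {x} = A \ {x} := by
  ext y
  simp only [Set.symmDiff_def, Set.mem_union, Set.mem_diff, Set.mem_singleton_iff]
  by_cases hy : y = x <;> simp [hy, h]

private lemma adj_iff' {α : Type*} (A B : Set α) :
    (symmDiff A B).ncard = 1 ↔ ∃ x, B = symmDiff A {x} := by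
  rw [Set.ncard_eq_one]
  refine exists_congr fun x => ?_
  constructor
  · intro h; rw [← h, symmDiff_symmDiff_cancel_left]
  · intro h; rw [h, symmDiff_symmDiff_cancel_left]

private lemma dom_of_nonempty {n : ℕ} {D : Set (Fin n)} (h : D.Nonempty) :
    IsDomSet (⊤ : SimpleGraph (Fin n)) D := by
  obtain ⟨a, ha⟩ := h
  intro v hv
  refine ⟨a, ha, ?_⟩
  simp only [top_adj]
  rintro rfl
  exact hv ha

private lemma not_dom_empty {n : ℕ} (a : Fin n) :
    ¬ IsDomSet (⊤ : SimpleGraph (Fin n)) (∅ : Set (Fin n)) := by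
  intro h
  obtain ⟨u, hu, -⟩ := h a (by simp)
  exact hu

private lemma dom_nonempty {n : ℕ} {D : Set (Fin n)} (a : Fin n)
    (h : IsDomSet (⊤ : SimpleGraph (Fin n)) D) : D.Nonempty := by
  by_cases ha : a ∈ D
  · exact ⟨a, ha⟩
  · obtain ⟨u, hu, -⟩ := h a ha
    exact ⟨u, hu⟩

/-- The degree of a vertex in the `k`-dominating graph, as the number of legal moves. -/
private lemma deg_eq {n k : ℕ}
    (A : {D : Set (Fin n) // IsDomSet (⊤ : SimpleGraph (Fin n)) D ∧ D.ncard ≤ k}) :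
    ((KDomGraph (⊤ : SimpleGraph (Fin n)) k).neighborSet A).ncard
      = {x : Fin n | IsDomSet (⊤ : SimpleGraph (Fin n)) (symmDiff A.1 {x}) ∧
          (symmDiff A.1 {x}).ncard ≤ k}.ncard := by
  have hinj : Function.Injective (fun x : Fin n => symmDiff A.1 {x}) := by
    intro x y h
    simp only at h
    have h2 : ({x} : Set (Fin n)) = {y} := by
      have := congrArg (symmDiff A.1) h
      rwa [symmDiff_symmDiff_cancel_left, symmDiff_symmDiff_cancel_left] at this
    simpa using h2
  have h1 : Subtype.val '' ((KDomGraph (⊤ : SimpleGraph (Fin n)) k).neighborSet A)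
      = (fun x : Fin n => symmDiff A.1 {x}) ''
        {x : Fin n | IsDomSet (⊤ : SimpleGraph (Fin n)) (symmDiff A.1 {x}) ∧
          (symmDiff A.1 {x}).ncard ≤ k} := by
    ext B
    simp only [Set.mem_image, Set.mem_setOf_eq]
    constructor
    · rintro ⟨⟨B, hB⟩, hadj, rfl⟩
      have hadj' : (symmDiff A.1 B).ncard = 1 := hadj
      obtain ⟨x, rfl⟩ := (adj_iff' _ _).1 hadj'
      exact ⟨x, hB, rfl⟩
    · rintro ⟨x, hx, rfl⟩
      refine ⟨⟨_, hx⟩, ?_, rfl⟩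
      show (symmDiff A.1 (symmDiff A.1 {x})).ncard = 1
      exact (adj_iff' _ _).2 ⟨x, rfl⟩
  have := congrArg Set.ncard h1
  rwa [Set.ncard_image_of_injective _ Subtype.val_injective,
    Set.ncard_image_of_injective _ hinj] at this

private lemma xset_singleton {n k : ℕ} (hk : 2 ≤ k) (a : Fin n) :
    {x : Fin n | IsDomSet (⊤ : SimpleGraph (Fin n)) (symmDiff ({a} : Set (Fin n)) {x}) ∧
      (symmDiff ({a} : Set (Fin n)) {x}).ncard ≤ k} = {a}ᶜ := by
  ext x
  simp only [Set.mem_setOf_eq, Set.mem_compl_iff, Set.mem_singleton_iff]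
  by_cases hx : x = a
  · subst hx
    simp only [symmDiff_self, Set.bot_eq_empty, not_true]
    exact iff_of_false (fun h => not_dom_empty x h.1) (by simp)
  · have hxa : x ∉ ({a} : Set (Fin n)) := by simp [hx]
    rw [symmDiff_singleton_of_not_mem_s15 _ _ hxa]
    have hcard : (insert x ({a} : Set (Fin n))).ncard = 2 := by
      rw [Set.ncard_insert_of_notMem hxa (Set.toFinite _), Set.ncard_singleton]
    refine iff_of_true ⟨dom_of_nonempty ⟨x, Set.mem_insert _ _⟩, by rw [hcard]; exact hk⟩ hx

private lemma ncard_compl_singleton {n : ℕ} (a : Fin n) :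
    ({a}ᶜ : Set (Fin n)).ncard = n - 1 := by
  have := Set.ncard_add_ncard_compl ({a} : Set (Fin n))
  simp only [Set.ncard_singleton, Nat.card_eq_fintype_card, Fintype.card_fin] at this
  omega

private lemma xset_pair_two {n : ℕ} {a b : Fin n} (hab : a ≠ b) :
    {x : Fin n | IsDomSet (⊤ : SimpleGraph (Fin n)) (symmDiff ({a, b} : Set (Fin n)) {x}) ∧
      (symmDiff ({a, b} : Set (Fin n)) {x}).ncard ≤ 2} = {a, b} := by
  ext x
  by_cases hx : x ∈ ({a, b} : Set (Fin n))
  · simp only [Set.mem_setOf_eq, hx, iff_true]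
    rw [symmDiff_singleton_of_mem_s15 _ _ hx]
    have hc : (({a, b} : Set (Fin n)) \ {x}).ncard = 1 := by
      rw [Set.ncard_diff_singleton_of_mem hx, Set.ncard_pair hab]
    exact ⟨dom_of_nonempty (Set.nonempty_of_ncard_ne_zero (by rw [hc]; omega)),
      by rw [hc]; omega⟩
  · simp only [Set.mem_setOf_eq, hx, iff_false]
    rw [symmDiff_singleton_of_not_mem_s15 _ _ hx]
    rintro ⟨-, hle⟩
    rw [Set.ncard_insert_of_notMem hx (Set.toFinite _), Set.ncard_pair hab] at hle
    omega

private lemma xset_pair_big {n k : ℕ} (hk : 3 ≤ k) {a b : Fin n} (hab : a ≠ b) :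
    {x : Fin n | IsDomSet (⊤ : SimpleGraph (Fin n)) (symmDiff ({a, b} : Set (Fin n)) {x}) ∧
      (symmDiff ({a, b} : Set (Fin n)) {x}).ncard ≤ k} = Set.univ := by
  ext x
  simp only [Set.mem_setOf_eq, Set.mem_univ, iff_true]
  by_cases hx : x ∈ ({a, b} : Set (Fin n))
  · rw [symmDiff_singleton_of_mem_s15 _ _ hx]
    have hc : (({a, b} : Set (Fin n)) \ {x}).ncard = 1 := by
      rw [Set.ncard_diff_singleton_of_mem hx, Set.ncard_pair hab]
    exact ⟨dom_of_nonempty (Set.nonempty_of_ncard_ne_zero (by rw [hc]; omega)),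
      by rw [hc]; omega⟩
  · rw [symmDiff_singleton_of_not_mem_s15 _ _ hx]
    have hc : (insert x ({a, b} : Set (Fin n))).ncard = 3 := by
      rw [Set.ncard_insert_of_notMem hx (Set.toFinite _), Set.ncard_pair hab]
    exact ⟨dom_of_nonempty ⟨x, Set.mem_insert _ _⟩, by rw [hc]; exact hk⟩

/-- Connectivity: every vertex is reachable from the singleton `{a0}`. -/
private lemma reach_aux {n k : ℕ} (hk : 2 ≤ k) (a0 : Fin n)
    (hA0 : IsDomSet (⊤ : SimpleGraph (Fin n)) ({a0} : Set (Fin n)) ∧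
      ({a0} : Set (Fin n)).ncard ≤ k) :
    ∀ m (A : {D : Set (Fin n) // IsDomSet (⊤ : SimpleGraph (Fin n)) D ∧ D.ncard ≤ k}),
      A.1.ncard = m →
      (KDomGraph (⊤ : SimpleGraph (Fin n)) k).Reachable A ⟨{a0}, hA0⟩ := by
  intro m
  induction m using Nat.strong_induction_on with
  | _ m ih =>
    intro A hm
    have hne : A.1.Nonempty := dom_nonempty a0 A.2.1
    have hpos : 1 ≤ m := by
      rw [← hm]
      exact (Set.ncard_pos A.1.toFinite).2 hne
    rcases eq_or_lt_of_le hpos with h1 | h2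
    · -- singleton case
      obtain ⟨a, ha⟩ := Set.ncard_eq_one.1 (hm.trans h1.symm)
      by_cases haa : a = a0
      · subst haa
        have : A = ⟨{a}, hA0⟩ := Subtype.ext ha
        rw [this]
      · have ha0 : a0 ∉ ({a} : Set (Fin n)) := by simp [Ne.symm haa]
        have hBcard : (insert a0 ({a} : Set (Fin n))).ncard = 2 := by
          rw [Set.ncard_insert_of_notMem ha0 (Set.toFinite _), Set.ncard_singleton]
        have hB : IsDomSet (⊤ : SimpleGraph (Fin n)) (insert a0 ({a} : Set (Fin n))) ∧
            (insert a0 ({a} : Set (Fin n))).ncard ≤ k :=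
          ⟨dom_of_nonempty ⟨a0, Set.mem_insert _ _⟩, by rw [hBcard]; exact hk⟩
        have hadj1 : (KDomGraph (⊤ : SimpleGraph (Fin n)) k).Adj A ⟨_, hB⟩ := by
          show (symmDiff A.1 (insert a0 ({a} : Set (Fin n)))).ncard = 1
          have hd : insert a0 ({a} : Set (Fin n)) \ {a} = {a0} := by
            ext y
            simp only [Set.mem_diff, Set.mem_insert_iff, Set.mem_singleton_iff]
            constructor
            · rintro ⟨h | h, h2⟩
              · exact h
              · exact absurd h h2
            · rintro rfl
              exact ⟨Or.inl rfl, fun h => haa h.symm⟩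
          rw [ha, symmDiff_of_le (Set.subset_insert _ _), hd, Set.ncard_singleton]
        have hadj2 : (KDomGraph (⊤ : SimpleGraph (Fin n)) k).Adj ⟨_, hB⟩ ⟨{a0}, hA0⟩ := by
          show (symmDiff (insert a0 ({a} : Set (Fin n))) ({a0} : Set (Fin n))).ncard = 1
          rw [symmDiff_singleton_of_mem_s15 _ _ (Set.mem_insert _ _)]
          have : insert a0 ({a} : Set (Fin n)) \ {a0} = {a} := by
            ext y
            simp only [Set.mem_diff, Set.mem_insert_iff, Set.mem_singleton_iff]
            constructor
            · rintro ⟨h | h, h2⟩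
              · exact absurd h h2
              · exact h
            · rintro rfl
              exact ⟨Or.inr rfl, haa⟩
          rw [this, Set.ncard_singleton]
        exact (hadj1.reachable).trans hadj2.reachable
    · -- size ≥ 2: remove an element
      obtain ⟨a, ha⟩ := hne
      have hc : (A.1 \ {a}).ncard = m - 1 := by
        rw [Set.ncard_diff_singleton_of_mem ha, hm]
      have hne' : (A.1 \ {a}).Nonempty :=
        Set.nonempty_of_ncard_ne_zero (by rw [hc]; omega)
      have hB : IsDomSet (⊤ : SimpleGraph (Fin n)) (A.1 \ {a}) ∧ (A.1 \ {a}).ncard ≤ k :=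
        ⟨dom_of_nonempty hne', by rw [hc]; omega⟩
      have hadj : (KDomGraph (⊤ : SimpleGraph (Fin n)) k).Adj A ⟨_, hB⟩ := by
        show (symmDiff A.1 (A.1 \ {a})).ncard = 1
        rw [symmDiff_comm, symmDiff_of_le Set.diff_subset, Set.diff_diff_right_self,
          Set.inter_eq_self_of_subset_right (Set.singleton_subset_iff.2 ha),
          Set.ncard_singleton]
      exact hadj.reachable.trans (ih (m - 1) (by omega) ⟨_, hB⟩ hc)

/-- For `n ≥ 2` and `1 < k < n`, the `k`-dominating graph of the complete graph `K_n`
is Eulerian iff `n` is odd and `k = 2`. -/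
theorem kDomGraph_complete_eulerian_iff (n k : ℕ) (hn : 2 ≤ n) (hk1 : 1 < k) (hk2 : k < n) :
    IsEulerian (KDomGraph (⊤ : SimpleGraph (Fin n)) k) ↔ Odd n ∧ k = 2 := by
  have hk : 2 ≤ k := hk1
  set a0 : Fin n := ⟨0, by omega⟩ with ha0
  set b0 : Fin n := ⟨1, by omega⟩ with hb0
  have hab : a0 ≠ b0 := by simp [ha0, hb0, Fin.ext_iff]
  have hA0 : IsDomSet (⊤ : SimpleGraph (Fin n)) ({a0} : Set (Fin n)) ∧
      ({a0} : Set (Fin n)).ncard ≤ k :=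
    ⟨dom_of_nonempty ⟨a0, rfl⟩, by rw [Set.ncard_singleton]; omega⟩
  constructor
  · rintro ⟨hdeg, -⟩
    -- n is odd, from the degree of the singleton {a0}
    have h1 := hdeg ⟨{a0}, hA0⟩
    rw [deg_eq, xset_singleton hk, ncard_compl_singleton] at h1
    have hodd : Odd n := by
      rw [Nat.even_sub (by omega : 1 ≤ n)] at h1
      rw [← Nat.not_even_iff_odd]
      intro he
      exact Nat.not_even_one (h1.1 he)
    refine ⟨hodd, ?_⟩
    by_contra hk2'
    have hk3 : 3 ≤ k := by omega
    have hA2 : IsDomSet (⊤ : SimpleGraph (Fin n)) ({a0, b0} : Set (Fin n)) ∧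
        ({a0, b0} : Set (Fin n)).ncard ≤ k :=
      ⟨dom_of_nonempty ⟨a0, Or.inl rfl⟩, by rw [Set.ncard_pair hab]; omega⟩
    have h2 := hdeg ⟨{a0, b0}, hA2⟩
    rw [deg_eq, xset_pair_big hk3 hab] at h2
    rw [Set.ncard_univ, Nat.card_eq_fintype_card, Fintype.card_fin] at h2
    rw [Nat.odd_iff] at hodd
    rw [Nat.even_iff] at h2
    omega
  · rintro ⟨hodd, rfl⟩
    constructor
    · -- every degree is even
      intro A
      rw [deg_eq]
      have hne : A.1.Nonempty := dom_nonempty a0 A.2.1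
      have hpos : 1 ≤ A.1.ncard := (Set.ncard_pos A.1.toFinite).2 hne
      have hle : A.1.ncard ≤ 2 := A.2.2
      rcases (by omega : A.1.ncard = 1 ∨ A.1.ncard = 2) with h | h
      · -- ncard = 1
        obtain ⟨a, ha⟩ := Set.ncard_eq_one.1 h
        rw [ha, xset_singleton (le_refl 2), ncard_compl_singleton]
        rw [Nat.even_iff]
        rw [Nat.odd_iff] at hodd
        omega
      · -- ncard = 2
        obtain ⟨a, b, hab', hab2⟩ := Set.ncard_eq_two.1 h
        rw [hab2, xset_pair_two hab', Set.ncard_pair hab']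
        exact even_two
    · intro u v x y hu hx
      exact ((reach_aux (le_refl 2) a0 hA0 u.1.ncard u rfl).trans
        (reach_aux (le_refl 2) a0 hA0 x.1.ncard x rfl).symm)
end

section
/- Let G be a connected finite simple graph on at least 2 vertices with the property that every set of γ(G) vertices of G is a dominating set of G. Then γ(G) ≤ 2. -/
open SimpleGraph

lemma aux2' : ∀ n, 4 ≤ n → n < n.choose 2 := by
  intro n
  induction n with
  | zero => omega
  | succ n ih =>
    intro hn
    rcases Nat.lt_or_ge n 4 with h4 | h4
    · interval_cases n <;> first | omega | decide
    · have h1 := ih h4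
      have : (n+1).choose 2 = n.choose 1 + n.choose 2 := Nat.choose_succ_succ n 1
      have : n.choose 1 = n := Nat.choose_one_right n
      omega

lemma auxlt' (k : ℕ) (h2 : 2 ≤ k) : ∀ n, k + 2 ≤ n → n < n.choose k := by
  intro n
  induction n with
  | zero => omega
  | succ n ih =>
    intro hn
    obtain ⟨j, rfl⟩ : ∃ j, k = j + 1 := ⟨k - 1, by omega⟩
    rcases Nat.lt_or_ge n (j + 3) with hlt | hge
    · have hEq : n + 1 = (j+1) + 2 := by omega
      rw [hEq]
      have hsymm : ((j+1)+2).choose (((j+1)+2) - (j+1)) = ((j+1)+2).choose (j+1) :=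
        Nat.choose_symm (by omega)
      have h2' : ((j+1)+2) - (j+1) = 2 := by omega
      rw [h2'] at hsymm
      rw [← hsymm]
      exact aux2' _ (by omega)
    · have h1 := ih (by omega)
      have hp : (n+1).choose (j+1) = n.choose j + n.choose (j+1) := Nat.choose_succ_succ n j
      have hpos : 0 < n.choose j := Nat.choose_pos (by omega)
      omega

/-- If `G` is a connected graph on at least two vertices in which every set of `γ(G)`
vertices is a dominating set, then `γ(G) ≤ 2`. -/
theorem domNumber_le_two_of_all_dominating {V : Type*} [Fintype V] (G : SimpleGraph V)
    (hconn : G.Connected) (hn : 2 ≤ Fintype.card V)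
    (h : ∀ S : Set V, S.ncard = domNumber G → IsDomSet G S) :
    domNumber G ≤ 2 := by
  classical
  by_contra hcon
  push_neg at hcon
  set g := domNumber G with hgdef
  have hg3 : 3 ≤ g := hcon
  set n := Fintype.card V with hndef
  -- the defining set is nonempty
  have huniv : IsDomSet G (Set.univ : Set V) := fun v hv => absurd (Set.mem_univ v) hv
  have hmem : n ∈ {m | ∃ D : Set V, IsDomSet G D ∧ D.ncard = m} :=
    ⟨Set.univ, huniv, (Set.ncard_univ V).trans Nat.card_eq_fintype_card⟩
  have hg_le : ∀ S : Set V, IsDomSet G S → g ≤ S.ncard :=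
    fun S hS => Nat.sInf_le ⟨S, hS, rfl⟩
  have hg_le_n : g ≤ n := Nat.sInf_le hmem
  -- notation for the "non-closed-neighborhood"
  set B : V → Set V := fun w => {u | u ≠ w ∧ ¬ G.Adj w u} with hBdef
  -- Lemma A : ncard (B w) ≤ g - 1
  have hA : ∀ w : V, (B w).ncard ≤ g - 1 := by
    intro w
    by_contra hA'
    have hge : g ≤ (B w).ncard := by omega
    obtain ⟨T, hTsub, hTcard⟩ := Set.exists_subset_card_eq hge
    have hdom := h T hTcard
    have hwT : w ∉ T := fun hw => (hTsub hw).1 rfl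
    obtain ⟨u, huT, hadj⟩ := hdom w hwT
    exact (hTsub huT).2 hadj.symm
  -- every vertex has a neighbor
  have hnbr : ∀ w : V, ∃ u, G.Adj w u := by
    intro w
    obtain ⟨v, hv⟩ := Fintype.exists_ne_of_one_lt_card (by omega) w
    obtain ⟨p⟩ := hconn.preconnected w v
    cases p with
    | nil => exact absurd rfl hv
    | cons hadj _ => exact ⟨_, hadj⟩
  -- Lemma B : every (g-1)-set is of the form B w
  have hB' : ∀ S : Set V, S.ncard = g - 1 → ∃ w : V, S = B w := by
    intro S hS
    have hnotdom : ¬ IsDomSet G S := by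
      intro hdom
      have := hg_le S hdom
      omega
    rw [IsDomSet] at hnotdom
    push_neg at hnotdom
    obtain ⟨w, hwS, hw⟩ := hnotdom
    refine ⟨w, ?_⟩
    have hsub : S ⊆ B w := by
      intro u huS
      exact ⟨fun he => hwS (he ▸ huS), fun hadj => hw u huS hadj.symm⟩
    exact Set.eq_of_subset_of_ncard_le hsub (by have := hA w; omega) (Set.toFinite _)
  have hNonempty : Nonempty V := Fintype.card_pos_iff.mp (by omega)
  -- handle the case n = g (impossible by connectivity)
  have hng : g + 1 ≤ n := by
    rcases Nat.lt_or_ge g n with hlt | hge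
    · omega
    · exfalso
      have hneq : n = g := by omega
      obtain ⟨w0⟩ := hNonempty
      have hScard : ((Set.univ : Set V) \ {w0}).ncard = g - 1 := by
        rw [Set.ncard_diff (by simp) (Set.toFinite _)]
        simp [Set.ncard_univ, ← hneq, hndef]
      obtain ⟨w1, hw1⟩ := hB' _ hScard
      have hw1self : w1 ∉ B w1 := fun hc => hc.1 rfl
      have hw1eq : w1 = w0 := by
        by_contra hne
        exact hw1self (hw1 ▸ ⟨Set.mem_univ w1, hne⟩)
      obtain ⟨u, hu⟩ := hnbr w0
      have huB : u ∈ (Set.univ : Set V) \ {w0} := ⟨Set.mem_univ u, fun he => G.loopless.irrefl w0 (by simpa [Set.mem_singleton_iff.mp he] using hu)⟩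
      rw [hw1, hw1eq] at huB
      exact huB.2 hu
  -- counting argument
  let f : Finset V → V := fun s =>
    if hs : ∃ w : V, (s : Set V) = B w then hs.choose else Classical.choice hNonempty
  have hcount : ((Finset.univ : Finset V).powersetCard (g - 1)).card ≤ (Finset.univ : Finset V).card := by
    apply Finset.card_le_card_of_injOn f (fun _ _ => Finset.mem_univ _)
    intro s hs t ht hst
    simp only [Finset.mem_coe, Finset.mem_powersetCard] at hs ht
    have hscard : (s : Set V).ncard = g - 1 := by
      rw [Set.ncard_coe_finset]; exact hs.2
    have htcard : (t : Set V).ncard = g - 1 := by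
      rw [Set.ncard_coe_finset]; exact ht.2
    have hsE : ∃ w : V, (s : Set V) = B w := hB' _ hscard
    have htE : ∃ w : V, (t : Set V) = B w := hB' _ htcard
    have h1 : (s : Set V) = B (f s) := by simp only [f, dif_pos hsE]; exact hsE.choose_spec
    have h2 : (t : Set V) = B (f t) := by simp only [f, dif_pos htE]; exact htE.choose_spec
    apply Finset.coe_injective
    rw [h1, h2, hst]
  rw [Finset.card_powersetCard, Finset.card_univ, ← hndef] at hcount
  have := auxlt' (g - 1) (by omega) n (by omega)
  omega
end

section
/- Let G be a finite simple graph on n ≥ 2 vertices and let G ∘ K₁ be its corona. Then every minimal dominating set of G ∘ K₁ has cardinality exactly n; in particular, γ(G ∘ K₁) = Γ(G ∘ K₁) = n, so G ∘ K₁ is well-dominated. -/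
open SimpleGraph

/-- `D` is a minimal dominating set of `G`. -/
def IsMinimalDomSet {V : Type*} (G : SimpleGraph V) (D : Set V) : Prop :=
  IsDomSet G D ∧ ∀ T ⊂ D, ¬ IsDomSet G T

/-- The upper domination number of `G`: the maximum cardinality of a minimal dominating set. -/
noncomputable def upperDomNumber {V : Type*} (G : SimpleGraph V) : ℕ :=
  sSup {n | ∃ D : Set V, IsMinimalDomSet G D ∧ D.ncard = n}

/-- The corona `G ∘ K₁` of `G`: attach a pendant vertex to every vertex of `G`. -/
def corona {V : Type*} (G : SimpleGraph V) : SimpleGraph (V ⊕ V) where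
  Adj x y :=
    match x, y with
    | Sum.inl a, Sum.inl b => G.Adj a b
    | Sum.inl a, Sum.inr b => a = b
    | Sum.inr a, Sum.inl b => a = b
    | Sum.inr _, Sum.inr _ => False
  symm := ⟨by
    rintro (a | a) (b | b) h
    · exact G.adj_symm h
    · exact h.symm
    · exact h.symm
    · exact h.elim⟩
  loopless := ⟨by
    rintro (a | a) h
    · exact G.irrefl h
    · exact h⟩

/-- Every minimal dominating set of the corona `G ∘ K₁` of a graph `G` on `n ≥ 2`
vertices has cardinality exactly `n`; in particular
`γ(G ∘ K₁) = Γ(G ∘ K₁) = n`, so the corona is well-dominated. -/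
theorem corona_well_dominated {V : Type*} [Fintype V] (G : SimpleGraph V)
    (hn : 2 ≤ Fintype.card V) :
    (∀ S : Set (V ⊕ V), IsMinimalDomSet (corona G) S → S.ncard = Fintype.card V) ∧
    domNumber (corona G) = Fintype.card V ∧
    upperDomNumber (corona G) = Fintype.card V := by

  classical
  -- (A) every dominating set contains `inl v` or `inr v` for each `v`
  have hA : ∀ D : Set (V ⊕ V), IsDomSet (corona G) D → ∀ v : V,
      Sum.inl v ∈ D ∨ Sum.inr v ∈ D := by
    intro D hD v
    by_cases h : Sum.inr v ∈ D
    · exact Or.inr h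
    · obtain ⟨u, hu, hadj⟩ := hD _ h
      rcases u with a | a
      · have hav : a = v := hadj
        subst hav; exact Or.inl hu
      · exact (hadj : False).elim
  -- (B) a minimal dominating set never contains both `inl v` and `inr v`
  have hB : ∀ D : Set (V ⊕ V), IsMinimalDomSet (corona G) D → ∀ v : V,
      ¬ (Sum.inl v ∈ D ∧ Sum.inr v ∈ D) := by
    rintro D ⟨hD, hmin⟩ v ⟨h1, h2⟩
    apply hmin (D \ {Sum.inr v})
    · constructor
      · exact Set.diff_subset
      · intro hsub
        have := hsub h2
        simp at this
    · intro w hw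
      by_cases hwv : w = Sum.inr v
      · subst hwv
        exact ⟨Sum.inl v, ⟨h1, by simp⟩, rfl⟩
      · have hwD : w ∉ D := fun hwD => hw ⟨hwD, hwv⟩
        obtain ⟨u, hu, hadj⟩ := hD _ hwD
        refine ⟨u, ⟨hu, ?_⟩, hadj⟩
        rintro rfl
        rcases w with b | b
        · have : v = b := hadj
          subst this; exact hwD h1
        · exact (hadj : False).elim
  -- the selector function
  have key : ∀ D : Set (V ⊕ V), IsDomSet (corona G) D →
      ∃ g : V → V ⊕ V, Function.Injective g ∧ Set.range g ⊆ D ∧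
        (∀ v, Sum.inl v ∉ D → g v = Sum.inr v) ∧ (∀ v, Sum.inl v ∈ D → g v = Sum.inl v) := by
    intro D hD
    refine ⟨fun v => if Sum.inl v ∈ D then Sum.inl v else Sum.inr v, ?_, ?_, ?_, ?_⟩
    · have hli : Function.LeftInverse (Sum.elim id id)
          (fun v => if Sum.inl v ∈ D then Sum.inl v else Sum.inr v) := by
        intro v
        by_cases h : Sum.inl v ∈ D <;> simp [h]
      exact hli.injective
    · rintro x ⟨v, rfl⟩
      by_cases h : Sum.inl v ∈ D
      · simpa [h] using h
      · have := (hA D hD v).resolve_left h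
        simpa [h] using this
    · intro v h; simp [h]
    · intro v h; simp [h]
  have hrange : ∀ g : V → V ⊕ V, Function.Injective g →
      (Set.range g).ncard = Fintype.card V := by
    intro g hg
    rw [← Set.image_univ, Set.ncard_image_of_injective _ hg, Set.ncard_univ,
      Nat.card_eq_fintype_card]
  -- part 1: minimal dominating sets have size n
  have part1 : ∀ S : Set (V ⊕ V), IsMinimalDomSet (corona G) S →
      S.ncard = Fintype.card V := by
    intro S hS
    obtain ⟨g, hginj, hgsub, hg1, hg2⟩ := key S hS.1
    have hSeq : S = Set.range g := by
      apply Set.Subset.antisymm _ hgsub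
      rintro (a | a) ha
      · exact ⟨a, hg2 a ha⟩
      · have : Sum.inl a ∉ S := fun h => hB S hS a ⟨h, ha⟩
        exact ⟨a, hg1 a this⟩
    rw [hSeq, hrange g hginj]
  -- lower bound for any dominating set
  have hlow : ∀ D : Set (V ⊕ V), IsDomSet (corona G) D →
      Fintype.card V ≤ D.ncard := by
    intro D hD
    obtain ⟨g, hginj, hgsub, -, -⟩ := key D hD
    have := Set.ncard_le_ncard hgsub D.toFinite
    rwa [hrange g hginj] at this
  -- the pendant set is a minimal dominating set of size n
  have hPdom : IsDomSet (corona G) (Set.range (Sum.inr : V → V ⊕ V)) := by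
    rintro (a | a) hv
    · exact ⟨Sum.inr a, ⟨a, rfl⟩, rfl⟩
    · exact absurd ⟨a, rfl⟩ hv
  have hPmin : IsMinimalDomSet (corona G) (Set.range (Sum.inr : V → V ⊕ V)) := by
    refine ⟨hPdom, ?_⟩
    rintro T ⟨hTsub, hTne⟩ hT
    obtain ⟨x, hxP, hxT⟩ : ∃ x, x ∈ Set.range (Sum.inr : V → V ⊕ V) ∧ x ∉ T := by
      by_contra h
      push_neg at h
      exact hTne fun x hx => h x hx
    obtain ⟨a, rfl⟩ := hxP
    obtain ⟨u, huT, hadj⟩ := hT _ hxT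
    rcases (hTsub huT : u ∈ Set.range Sum.inr) with ⟨b, rfl⟩
    exact (hadj : False).elim
  have hPcard : (Set.range (Sum.inr : V → V ⊕ V)).ncard = Fintype.card V :=
    hrange _ Sum.inr_injective
  refine ⟨part1, ?_, ?_⟩
  · -- domination number
    apply le_antisymm
    · exact Nat.sInf_le ⟨_, hPdom, hPcard⟩
    · unfold domNumber
      have hne : Set.Nonempty {m | ∃ D : Set (V ⊕ V), IsDomSet (corona G) D ∧ D.ncard = m} :=
        ⟨Fintype.card V, Set.range Sum.inr, hPdom, hPcard⟩
      apply le_csInf hne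
      rintro m ⟨D, hD, rfl⟩
      exact hlow D hD
  · -- upper domination number
    have : {m | ∃ D : Set (V ⊕ V), IsMinimalDomSet (corona G) D ∧ D.ncard = m}
        = {Fintype.card V} := by
      ext m
      constructor
      · rintro ⟨D, hD, rfl⟩
        exact part1 D hD
      · rintro rfl
        exact ⟨_, hPmin, hPcard⟩
    rw [upperDomNumber, this, csSup_singleton]
end
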